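/- arXiv:1308.4088 — 9 statements merged into one kernel-verified Lean document; each statement's English description precedes it below -/
import Mathlib

section
/- Let p be a square-free real polynomial of degree n with roots z_1,...,z_n. Then the root separation σ_p := min_{i≠j} |z_i - z_j| satisfies σ_p ≥ √|Disc(p)| · ‖p‖_2^{-(n-1)} · n^{-(n+2)/2}, where Disc(p) = p_n^{2n-2} ∏_{i<j}(z_j - z_i)^2. -/
open Polynomial Finset Matrix
open scoped ComplexOrder

lemma trace_eq_sum_eigs {m : ℕ} {G : Matrix (Fin m) (Fin m) ℂ} (hG : G.IsHermitian) :
    G.trace = ∑ i, (hG.eigenvalues i : ℂ) := by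
  conv_lhs => rw [hG.spectral_theorem]
  rw [Unitary.conjStarAlgAut_apply]
  rw [Matrix.trace_mul_cycle]
  rw [show (star (hG.eigenvectorUnitary : Matrix (Fin m) (Fin m) ℂ)) *
      (hG.eigenvectorUnitary : Matrix (Fin m) (Fin m) ℂ) = 1 from
    Unitary.coe_star_mul_self _, one_mul, Matrix.trace_diagonal]
  rfl

lemma det_le_one_of_unit_rows {m : ℕ} (hm : 0 < m) (B : Matrix (Fin m) (Fin m) ℂ)
    (hB : ∀ i, ∑ j, Complex.normSq (B i j) = 1) : ‖B.det‖ ≤ 1 := by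
  set G := B * Bᴴ with hGdef
  have hPSD : G.PosSemidef := Matrix.posSemidef_self_mul_conjTranspose B
  have hH : G.IsHermitian := hPSD.1
  have hev : ∀ i, 0 ≤ hH.eigenvalues i := hPSD.eigenvalues_nonneg
  -- trace
  have htrace : G.trace = (m : ℂ) := by
    simp only [Matrix.trace, Matrix.diag, hGdef, Matrix.mul_apply, Matrix.conjTranspose_apply]
    have key : ∀ i : Fin m, ∑ j, B i j * star (B i j) = (1 : ℂ) := by
      intro i
      have h := hB i
      calc ∑ j, B i j * star (B i j) = ∑ j, (Complex.normSq (B i j) : ℂ) :=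
            Finset.sum_congr rfl fun j _ => (Complex.mul_conj (B i j))
        _ = ((∑ j, Complex.normSq (B i j) : ℝ) : ℂ) := by push_cast; rfl
        _ = 1 := by rw [h]; norm_num
    rw [Finset.sum_congr rfl fun i _ => key i]
    simp
  have hsum : ∑ i, hH.eigenvalues i = m := by
    have h2 := trace_eq_sum_eigs hH
    rw [htrace] at h2
    have h3 : ((m : ℝ) : ℂ) = ((∑ i, hH.eigenvalues i : ℝ) : ℂ) := by
      push_cast
      push_cast at h2
      exact h2
    exact_mod_cast h3.symm
  -- AM-GM
  have hprod : ∏ i, hH.eigenvalues i ≤ 1 := by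
    have hgm := Real.geom_mean_le_arith_mean_weighted Finset.univ (fun _ => (m : ℝ)⁻¹)
      hH.eigenvalues (fun i _ => by positivity)
      (by simp [Finset.card_univ]; field_simp) (fun i _ => hev i)
    have hsum' : ∑ i, (m : ℝ)⁻¹ * hH.eigenvalues i = 1 := by
      rw [← Finset.mul_sum, hsum]
      field_simp
    rw [hsum'] at hgm
    have hp : (∏ i, hH.eigenvalues i ^ ((m : ℝ)⁻¹)) ^ (m : ℕ) ≤ 1 ^ (m : ℕ) :=
      pow_le_pow_left₀ (Finset.prod_nonneg fun i _ => Real.rpow_nonneg (hev i) _) hgm m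
    rw [one_pow, ← Finset.prod_pow] at hp
    calc ∏ i, hH.eigenvalues i = ∏ i, (hH.eigenvalues i ^ ((m:ℝ)⁻¹)) ^ (m : ℕ) := by
          refine Finset.prod_congr rfl fun i _ => ?_
          rw [← Real.rpow_natCast (hH.eigenvalues i ^ ((m:ℝ)⁻¹)), ← Real.rpow_mul (hev i),
            inv_mul_cancel₀ (by exact_mod_cast hm.ne' : (m:ℝ) ≠ 0), Real.rpow_one]
      _ ≤ 1 := hp
  -- det
  have hdet : (Complex.normSq B.det : ℂ) = ((∏ i, hH.eigenvalues i : ℝ) : ℂ) := by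
    have hG2 : G.det = B.det * star B.det := by
      rw [hGdef, Matrix.det_mul, Matrix.det_conjTranspose]
    rw [show star B.det = (starRingEnd ℂ) B.det from rfl, Complex.mul_conj] at hG2
    rw [← hG2, hH.det_eq_prod_eigenvalues]
    push_cast
    rfl
  have hns : Complex.normSq B.det ≤ 1 := by
    have h5 : Complex.normSq B.det = ∏ i, hH.eigenvalues i := by exact_mod_cast hdet
    rw [h5]; exact hprod
  rw [Complex.norm_def]
  calc Real.sqrt (Complex.normSq B.det) ≤ Real.sqrt 1 := Real.sqrt_le_sqrt hns
    _ = 1 := Real.sqrt_one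

lemma hadamard {m : ℕ} (hm : 0 < m) (A : Matrix (Fin m) (Fin m) ℂ) :
    ‖A.det‖ ≤ ∏ i, Real.sqrt (∑ j, Complex.normSq (A i j)) := by
  by_cases hz : ∃ i, ∀ j, A i j = 0
  · obtain ⟨i, hi⟩ := hz
    rw [Matrix.det_eq_zero_of_row_eq_zero i hi]
    simp only [map_zero, norm_zero]
    exact Finset.prod_nonneg fun i _ => Real.sqrt_nonneg _
  push_neg at hz
  set r : Fin m → ℝ := fun i => Real.sqrt (∑ j, Complex.normSq (A i j)) with hr
  have hrpos : ∀ i, 0 < r i := by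
    intro i
    apply Real.sqrt_pos.2
    obtain ⟨j, hj⟩ := hz i
    calc (0:ℝ) < Complex.normSq (A i j) := Complex.normSq_pos.2 hj
      _ ≤ _ := Finset.single_le_sum (fun j _ => Complex.normSq_nonneg _) (Finset.mem_univ j)
  set B : Matrix (Fin m) (Fin m) ℂ := Matrix.of fun i j => (((r i)⁻¹ : ℝ) : ℂ) * A i j with hBdef
  have hBrows : ∀ i, ∑ j, Complex.normSq (B i j) = 1 := by
    intro i
    have : ∀ j, Complex.normSq (B i j) = (r i)⁻¹ ^ 2 * Complex.normSq (A i j) := by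
      intro j
      rw [hBdef]
      simp only [Matrix.of_apply, _root_.map_mul, Complex.normSq_ofReal]
      ring
    rw [Finset.sum_congr rfl fun j _ => this j, ← Finset.mul_sum]
    have hsq : (∑ j, Complex.normSq (A i j)) = r i ^ 2 := by
      rw [hr]
      exact (Real.sq_sqrt (Finset.sum_nonneg fun j _ => Complex.normSq_nonneg _)).symm
    rw [hsq]
    exact div_self (pow_ne_zero 2 (hrpos i).ne') |>.symm ▸ (by field_simp [(hrpos i).ne'])
  have hdetB : B.det = (∏ i, (((r i)⁻¹ : ℝ) : ℂ)) * A.det := by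
    rw [hBdef]
    exact Matrix.det_mul_column _ _
  have h1 : ‖B.det‖ ≤ 1 := det_le_one_of_unit_rows hm B hBrows
  have h2 : ‖B.det‖ = (∏ i, (r i)⁻¹) * ‖A.det‖ := by
    rw [hdetB, norm_mul, norm_prod]
    congr 1
    refine Finset.prod_congr rfl fun i _ => ?_
    rw [Complex.norm_real, Real.norm_eq_abs, abs_of_pos (inv_pos.2 (hrpos i))]
  rw [h2] at h1
  have hprodpos : 0 < ∏ i, r i := Finset.prod_pos fun i _ => hrpos i
  have h3 : ‖A.det‖ ≤ ∏ i, r i := by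
    rw [Finset.prod_inv_distrib] at h1
    have := mul_le_mul_of_nonneg_left h1 hprodpos.le
    rwa [mul_one, ← mul_assoc, mul_inv_cancel₀ hprodpos.ne', one_mul] at this
  exact h3

-- shift lemma
lemma shift_sum (r : Polynomial ℂ) (M : ℕ) :
    ∑ k ∈ range (M+1), Complex.normSq ((X * r).coeff k)
      = ∑ k ∈ range M, Complex.normSq (r.coeff k) := by
  rw [Finset.sum_range_succ']
  simp [Polynomial.coeff_X_mul]

lemma swap_factor (a : ℂ) (r : Polynomial ℂ) (M : ℕ) (hr : r.coeff M = 0) :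
    ∑ k ∈ range (M+1), Complex.normSq (((X - C a) * r).coeff k)
      = ∑ k ∈ range (M+1), Complex.normSq (((C (starRingEnd ℂ a) * X + C (-1)) * r).coeff k) := by
  set u : ℕ → ℂ := fun k => (X * r).coeff k with hu
  set v : ℕ → ℂ := fun k => r.coeff k with hv
  have hc1 : ∀ k, ((X - C a) * r).coeff k = u k - a * v k := by
    intro k
    rw [sub_mul, Polynomial.coeff_sub, Polynomial.coeff_C_mul]
  have hc2 : ∀ k, ((C (starRingEnd ℂ a) * X + C (-1)) * r).coeff k
      = (starRingEnd ℂ a) * u k - v k := by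
    intro k
    rw [add_mul, Polynomial.coeff_add, mul_assoc, Polynomial.coeff_C_mul]
    have h9 : (C (-1:ℂ) * r).coeff k = -(r.coeff k) := by
      rw [Polynomial.coeff_C_mul]; ring
    rw [h9]
    simp only [hu, hv]
    ring_nf
  have hA : ∑ k ∈ range (M+1), Complex.normSq (u k) = ∑ k ∈ range (M+1), Complex.normSq (v k) := by
    rw [hu]
    simp only
    rw [shift_sum, Finset.sum_range_succ, hv]
    simp [hr]
  have key : ∀ k, Complex.normSq (u k - a * v k)
      = Complex.normSq ((starRingEnd ℂ a) * u k - v k)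
        + (1 - Complex.normSq a) * (Complex.normSq (u k) - Complex.normSq (v k)) := by
    intro k
    have hcross : u k * (starRingEnd ℂ) (a * v k) = ((starRingEnd ℂ a) * u k) * (starRingEnd ℂ) (v k) := by
      rw [_root_.map_mul]; ring
    rw [Complex.normSq_sub, Complex.normSq_sub, hcross]
    rw [Complex.normSq_mul, Complex.normSq_mul, Complex.normSq_conj]
    ring
  calc ∑ k ∈ range (M+1), Complex.normSq (((X - C a) * r).coeff k)
      = ∑ k ∈ range (M+1), (Complex.normSq ((starRingEnd ℂ a) * u k - v k)
        + (1 - Complex.normSq a) * (Complex.normSq (u k) - Complex.normSq (v k))) := by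
        refine Finset.sum_congr rfl fun k _ => ?_
        rw [hc1 k, key k]
    _ = ∑ k ∈ range (M+1), Complex.normSq ((starRingEnd ℂ a) * u k - v k)
        + (1 - Complex.normSq a)
          * (∑ k ∈ range (M+1), Complex.normSq (u k) - ∑ k ∈ range (M+1), Complex.normSq (v k)) := by
        rw [Finset.sum_add_distrib, ← Finset.mul_sum, Finset.sum_sub_distrib]
    _ = ∑ k ∈ range (M+1), Complex.normSq ((starRingEnd ℂ a) * u k - v k) := by
        rw [hA, sub_self, mul_zero, add_zero]
    _ = _ := by
        refine Finset.sum_congr rfl fun k _ => ?_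
        rw [hc2 k]

lemma conj_ne_zero_of_onelt {w : ℂ} (h : 1 < ‖w‖) : (starRingEnd ℂ) w ≠ 0 := by
  intro h0
  have hw : w = 0 := by simpa using congrArg (starRingEnd ℂ) h0
  rw [hw] at h
  simp at h
  exact absurd h (by norm_num)

noncomputable def flipFactor {n : ℕ} (z : Fin n → ℂ) (T : Finset (Fin n)) (i : Fin n) :
    Polynomial ℂ :=
  if i ∈ T then C (starRingEnd ℂ (z i)) * X + C (-1) else X - C (z i)

lemma flipFactor_natDegree_le {n : ℕ} (z : Fin n → ℂ) (T : Finset (Fin n)) (i : Fin n) :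
    (flipFactor z T i).natDegree ≤ 1 := by
  unfold flipFactor
  split_ifs
  · exact Polynomial.natDegree_linear_le
  · exact le_of_eq (Polynomial.natDegree_X_sub_C _)

lemma flip_sum {n : ℕ} (c : ℂ) (z : Fin n → ℂ) (T : Finset (Fin n)) :
    ∑ k ∈ range (n+1), Complex.normSq ((C c * ∏ i, flipFactor z T i).coeff k)
      = ∑ k ∈ range (n+1), Complex.normSq ((C c * ∏ i, (X - C (z i))).coeff k) := by
  induction T using Finset.induction_on with
  | empty =>
      have he : ∀ i : Fin n, flipFactor z (∅ : Finset (Fin n)) i = X - C (z i) := fun i => by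
        simp [flipFactor]
      rw [Finset.prod_congr rfl fun i _ => he i]
  | @insert a T' ha IH =>
      have hn1 : 0 < n := a.pos
      set R : Polynomial ℂ := C c * ∏ i ∈ Finset.univ.erase a, flipFactor z T' i with hR
      have hgcongr : ∀ i ∈ Finset.univ.erase a, flipFactor z (insert a T') i = flipFactor z T' i := by
        intro i hi
        have hia : i ≠ a := (Finset.mem_erase.1 hi).1
        unfold flipFactor
        simp [Finset.mem_insert, hia]
      have hfac1 : C c * ∏ i, flipFactor z (insert a T') i
          = (C (starRingEnd ℂ (z a)) * X + C (-1)) * R := by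
        rw [← Finset.mul_prod_erase Finset.univ _ (Finset.mem_univ a),
          Finset.prod_congr rfl hgcongr, hR]
        have : flipFactor z (insert a T') a = C (starRingEnd ℂ (z a)) * X + C (-1) := by
          unfold flipFactor; simp
        rw [this]
        try ring
      have hfac2 : C c * ∏ i, flipFactor z T' i = (X - C (z a)) * R := by
        rw [← Finset.mul_prod_erase Finset.univ _ (Finset.mem_univ a), hR]
        have : flipFactor z T' a = X - C (z a) := by
          unfold flipFactor; simp [ha]
        rw [this]
        try ring
      have hRdeg : R.natDegree < n := by
        have h1 : R.natDegree ≤ (∏ i ∈ Finset.univ.erase a, flipFactor z T' i).natDegree :=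
          Polynomial.natDegree_C_mul_le _ _
        have h2 : (∏ i ∈ Finset.univ.erase a, flipFactor z T' i).natDegree
            ≤ ∑ i ∈ Finset.univ.erase a, (flipFactor z T' i).natDegree :=
          Polynomial.natDegree_prod_le _ _
        have h3 : ∑ i ∈ Finset.univ.erase a, (flipFactor z T' i).natDegree
            ≤ ∑ _i ∈ Finset.univ.erase a, 1 :=
          Finset.sum_le_sum fun i _ => flipFactor_natDegree_le z T' i
        have h4 : ∑ _i ∈ Finset.univ.erase a, 1 = n - 1 := by
          rw [Finset.sum_const, smul_eq_mul, mul_one, Finset.card_erase_of_mem (Finset.mem_univ a),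
            Finset.card_univ, Fintype.card_fin]
        omega
      have hRcoeff : R.coeff n = 0 := Polynomial.coeff_eq_zero_of_natDegree_lt hRdeg
      calc ∑ k ∈ range (n+1), Complex.normSq ((C c * ∏ i, flipFactor z (insert a T') i).coeff k)
          = ∑ k ∈ range (n+1), Complex.normSq (((C (starRingEnd ℂ (z a)) * X + C (-1)) * R).coeff k) := by
            rw [hfac1]
        _ = ∑ k ∈ range (n+1), Complex.normSq (((X - C (z a)) * R).coeff k) :=
            (swap_factor (z a) R n hRcoeff).symm
        _ = ∑ k ∈ range (n+1), Complex.normSq ((C c * ∏ i, flipFactor z T' i).coeff k) := by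
            rw [hfac2]
        _ = _ := IH

lemma landau {n : ℕ} (hn : 0 < n) (c : ℂ) (hc : c ≠ 0) (z : Fin n → ℂ) :
    ‖c‖ * ∏ i, max 1 (‖z i‖) ≤
      Real.sqrt (∑ k ∈ range (n+1), Complex.normSq ((C c * ∏ i, (X - C (z i))).coeff k)) := by
  classical
  set T : Finset (Fin n) := Finset.univ.filter (fun i => 1 < ‖z i‖) with hT
  set q : Polynomial ℂ := C c * ∏ i, flipFactor z T i with hq
  have hfne : ∀ i, flipFactor z T i ≠ 0 := by
    intro i
    unfold flipFactor
    split_ifs with h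
    · intro hcon
      have hz : (starRingEnd ℂ) (z i) ≠ 0 := by
        simp only [hT, Finset.mem_filter] at h
        exact conj_ne_zero_of_onelt h.2
      have := Polynomial.natDegree_linear (hz) (b := (-1 : ℂ))
      rw [hcon] at this
      simp at this
    · exact Polynomial.X_sub_C_ne_zero _
  have hlcf : ∀ i, (flipFactor z T i).leadingCoeff
      = if i ∈ T then (starRingEnd ℂ) (z i) else 1 := by
    intro i
    unfold flipFactor
    split_ifs with h
    · apply Polynomial.leadingCoeff_linear
      simp only [hT, Finset.mem_filter] at h
      exact conj_ne_zero_of_onelt h.2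
    · exact Polynomial.leadingCoeff_X_sub_C _
  have hdegf : ∀ i, (flipFactor z T i).natDegree = 1 := by
    intro i
    unfold flipFactor
    split_ifs with h
    · apply Polynomial.natDegree_linear
      simp only [hT, Finset.mem_filter] at h
      exact conj_ne_zero_of_onelt h.2
    · exact Polynomial.natDegree_X_sub_C _
  have hqdeg : q.natDegree = n := by
    rw [hq, Polynomial.natDegree_C_mul hc, Polynomial.natDegree_prod _ _ (fun i _ => hfne i)]
    simp [hdegf]
  have hqlc : q.leadingCoeff = c * ∏ i, (if i ∈ T then (starRingEnd ℂ) (z i) else 1) := by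
    rw [hq, Polynomial.leadingCoeff_mul, Polynomial.leadingCoeff_C,
      Polynomial.leadingCoeff_prod]
    congr 1
    exact Finset.prod_congr rfl fun i _ => hlcf i
  have habs : ‖q.leadingCoeff‖ = ‖c‖ * ∏ i, max 1 (‖z i‖) := by
    rw [hqlc, norm_mul, norm_prod]
    congr 1
    refine Finset.prod_congr rfl fun i _ => ?_
    by_cases h : i ∈ T
    · rw [if_pos h]
      simp only [hT, Finset.mem_filter] at h
      rw [Complex.norm_conj]
      exact (max_eq_right (le_of_lt h.2)).symm
    · rw [if_neg h]
      simp only [hT, Finset.mem_filter, Finset.mem_univ, true_and, not_lt] at h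
      rw [norm_one]
      exact (max_eq_left h).symm
  have hle : Complex.normSq (q.coeff n) ≤ ∑ k ∈ range (n+1), Complex.normSq (q.coeff k) :=
    Finset.single_le_sum (fun k _ => Complex.normSq_nonneg _) (Finset.self_mem_range_succ n)
  have hcoeffn : q.coeff n = q.leadingCoeff := by
    rw [Polynomial.leadingCoeff, hqdeg]
  calc ‖c‖ * ∏ i, max 1 (‖z i‖) = ‖q.coeff n‖ := by
        rw [hcoeffn, habs]
    _ = Real.sqrt (Complex.normSq (q.coeff n)) := by rw [Complex.norm_def]
    _ ≤ Real.sqrt (∑ k ∈ range (n+1), Complex.normSq (q.coeff k)) := Real.sqrt_le_sqrt hle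
    _ = _ := by rw [hq, flip_sum]

lemma prod_filter_lt_eq {n : ℕ} {M : Type*} [CommMonoid M] (f : Fin n × Fin n → M) :
    ∏ q ∈ Finset.univ.filter (fun q : Fin n × Fin n => q.1 < q.2), f q
      = ∏ i, ∏ j ∈ Finset.Ioi i, f (i, j) := by
  rw [Finset.prod_sigma']
  refine Finset.prod_bij' (fun (q : Fin n × Fin n) _ => (⟨q.1, q.2⟩ : Σ _ : Fin n, Fin n))
    (fun x _ => (x.1, x.2)) ?_ ?_ ?_ ?_ ?_
  · intro q hq
    simp only [Finset.mem_filter, Finset.mem_univ, true_and] at hq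
    simp [Finset.mem_Ioi, hq]
  · intro x hx
    simp only [Finset.mem_sigma, Finset.mem_univ, Finset.mem_Ioi, true_and] at hx
    simp [hx]
  · intro q hq; rfl
  · intro x hx; rfl
  · intro q hq; rfl

lemma pow_diff_bound (x y : ℂ) (hxy : ‖y‖ ≤ ‖x‖) (t : ℕ) :
    ‖x ^ t - y ^ t‖
      ≤ t * (max 1 (‖x‖)) ^ (t - 1) * ‖x - y‖ := by
  induction t with
  | zero => simp
  | succ t ih =>
      set M := max 1 (‖x‖) with hM
      have hM1 : 1 ≤ M := le_max_left _ _
      have hMx : ‖x‖ ≤ M := le_max_right _ _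
      have hMy : ‖y‖ ≤ M := le_trans hxy hMx
      have hM0 : 0 ≤ M := le_trans zero_le_one hM1
      have key : x ^ (t+1) - y ^ (t+1) = x ^ t * (x - y) + y * (x ^ t - y ^ t) := by ring
      calc ‖x ^ (t+1) - y ^ (t+1)‖
          ≤ ‖x ^ t * (x - y)‖ + ‖y * (x ^ t - y ^ t)‖ := by
            rw [key]; exact norm_add_le _ _
        _ = ‖x‖ ^ t * ‖x - y‖
            + ‖y‖ * ‖x ^ t - y ^ t‖ := by
            rw [norm_mul, norm_mul, norm_pow]
        _ ≤ M ^ t * ‖x - y‖ + M * (t * M ^ (t - 1) * ‖x - y‖) := by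
            have h1 : ‖x‖ ^ t ≤ M ^ t := pow_le_pow_left₀ (norm_nonneg _) hMx t
            have h2 := norm_nonneg (x - y)
            have h3 := norm_nonneg (x ^ t - y ^ t)
            nlinarith [ih, mul_le_mul_of_nonneg_right h1 h2, mul_le_mul hMy ih h3 hM0]
        _ ≤ (t + 1 : ℕ) * M ^ ((t+1) - 1) * ‖x - y‖ := by
            rcases Nat.eq_zero_or_pos t with ht | ht
            · subst ht; simp
            · have hpow : M * M ^ (t - 1) = M ^ t := by
                rw [← pow_succ']
                congr 1
                omega
              have : M * (t * M ^ (t-1) * ‖x - y‖)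
                  = t * (M ^ t * ‖x - y‖) := by
                rw [← hpow]; ring
              rw [this]
              push_cast [Nat.add_sub_cancel]
              ring_nf
              try rfl
              try linarith

lemma vandermonde_bound {n : ℕ} (hn : 2 ≤ n) (z : Fin n → ℂ) (i j : Fin n) (hij : i ≠ j)
    (hle : ‖z i‖ ≤ ‖z j‖) :
    ‖(Matrix.vandermonde z).det‖
      ≤ ‖z j - z i‖ * ((n:ℝ) * Real.sqrt n ^ n)
        * ∏ k, (max 1 (‖z k‖)) ^ (n-1) := by
  set d := ‖z j - z i‖ with hd
  set Mk : Fin n → ℝ := fun k => max 1 (‖z k‖) with hMk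
  have hM1 : ∀ k, 1 ≤ Mk k := fun k => le_max_left _ _
  have hM0 : ∀ k, 0 ≤ Mk k := fun k => le_trans zero_le_one (hM1 k)
  have hd0 : 0 ≤ d := norm_nonneg _
  have hsn : (0:ℝ) ≤ Real.sqrt n := Real.sqrt_nonneg _
  set V := Matrix.vandermonde z with hV
  set W := V.updateRow j (V j + (-1 : ℂ) • V i) with hW
  have hdet : W.det = V.det := Matrix.det_updateRow_add_smul_self V hij.symm (-1)
  have hHad := hadamard (m := n) (by omega) W
  set B : Fin n → ℝ := fun k =>
    if k = j then d * ((n:ℝ) * Real.sqrt n) * Mk j ^ (n-1) else Real.sqrt n * Mk k ^ (n-1) with hB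
  have hrow : ∀ k, Real.sqrt (∑ t, Complex.normSq (W k t)) ≤ B k := by
    intro k
    by_cases hk : k = j
    · subst hk
      rw [hB]
      simp only [if_pos rfl]
      have hentry : ∀ t : Fin n, Complex.normSq (W k t) ≤ ((n:ℝ) * Mk k ^ (n-1) * d)^2 := by
        intro t
        have hWkt : W k t = z k ^ (t:ℕ) - z i ^ (t:ℕ) := by
          rw [hW, Matrix.updateRow_self]
          simp [hV, Matrix.vandermonde_apply, sub_eq_add_neg]
        have habs : ‖W k t‖ ≤ (n:ℝ) * Mk k ^ (n-1) * d := by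
          rw [hWkt]
          calc ‖z k ^ (t:ℕ) - z i ^ (t:ℕ)‖
              ≤ (t:ℕ) * (max 1 (‖z k‖)) ^ ((t:ℕ) - 1) * ‖z k - z i‖ :=
                pow_diff_bound (z k) (z i) hle (t:ℕ)
            _ ≤ (n:ℝ) * Mk k ^ (n-1) * d := by
                have h1 : ((t:ℕ):ℝ) ≤ (n:ℝ) := by exact_mod_cast (le_of_lt t.2)
                have h2 : (max 1 (‖z k‖)) ^ ((t:ℕ) - 1) ≤ Mk k ^ (n-1) := by
                  rw [hMk]
                  exact pow_le_pow_right₀ (hM1 k) (by omega)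
                have h3 : ‖z k - z i‖ = d := by rw [hd]
                rw [h3]
                have := mul_le_mul (mul_le_mul h1 h2 (by positivity) (by positivity))
                  (le_refl d) hd0 (by positivity)
                simpa using this
        rw [← Complex.sq_norm]
        exact pow_le_pow_left₀ (norm_nonneg _) habs 2
      calc Real.sqrt (∑ t, Complex.normSq (W k t))
          ≤ Real.sqrt (∑ _t : Fin n, ((n:ℝ) * Mk k ^ (n-1) * d)^2) :=
            Real.sqrt_le_sqrt (Finset.sum_le_sum fun t _ => hentry t)
        _ = Real.sqrt ((n:ℝ) * ((n:ℝ) * Mk k ^ (n-1) * d)^2) := by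
            rw [Finset.sum_const, Finset.card_univ, Fintype.card_fin, nsmul_eq_mul]
        _ = Real.sqrt n * ((n:ℝ) * Mk k ^ (n-1) * d) := by
            rw [Real.sqrt_mul (by positivity), Real.sqrt_sq (by positivity)]
        _ = d * ((n:ℝ) * Real.sqrt n) * Mk k ^ (n-1) := by ring
    · rw [hB]
      simp only [if_neg hk]
      have hentry : ∀ t : Fin n, Complex.normSq (W k t) ≤ (Mk k ^ (n-1))^2 := by
        intro t
        have hWkt : W k t = z k ^ (t:ℕ) := by
          rw [hW, Matrix.updateRow_ne hk, hV, Matrix.vandermonde_apply]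
        have habs : ‖W k t‖ ≤ Mk k ^ (n-1) := by
          rw [hWkt, norm_pow]
          calc ‖z k‖ ^ (t:ℕ) ≤ Mk k ^ (t:ℕ) :=
              pow_le_pow_left₀ (norm_nonneg _) (le_max_right _ _) _
            _ ≤ Mk k ^ (n-1) := pow_le_pow_right₀ (hM1 k) (by omega)
        rw [← Complex.sq_norm]
        exact pow_le_pow_left₀ (norm_nonneg _) habs 2
      calc Real.sqrt (∑ t, Complex.normSq (W k t))
          ≤ Real.sqrt (∑ _t : Fin n, (Mk k ^ (n-1))^2) :=
            Real.sqrt_le_sqrt (Finset.sum_le_sum fun t _ => hentry t)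
        _ = Real.sqrt ((n:ℝ) * (Mk k ^ (n-1))^2) := by
            rw [Finset.sum_const, Finset.card_univ, Fintype.card_fin, nsmul_eq_mul]
        _ = Real.sqrt n * Mk k ^ (n-1) := by
            rw [Real.sqrt_mul (by positivity), Real.sqrt_sq (by positivity)]
  have hprod : ∏ k, Real.sqrt (∑ t, Complex.normSq (W k t)) ≤ ∏ k, B k :=
    Finset.prod_le_prod (fun k _ => Real.sqrt_nonneg _) (fun k _ => hrow k)
  have hBprod : ∏ k, B k = d * ((n:ℝ) * Real.sqrt n ^ n) * ∏ k, Mk k ^ (n-1) := by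
    rw [← Finset.mul_prod_erase Finset.univ B (Finset.mem_univ j), hB]
    simp only [if_pos rfl]
    have h1 : ∀ k ∈ Finset.univ.erase j,
        (if k = j then d * ((n:ℝ) * Real.sqrt n) * Mk j ^ (n-1) else Real.sqrt n * Mk k ^ (n-1))
          = Real.sqrt n * Mk k ^ (n-1) := by
      intro k hk
      rw [if_neg (Finset.mem_erase.1 hk).1]
    rw [Finset.prod_congr rfl h1, Finset.prod_mul_distrib, Finset.prod_const,
      Finset.card_erase_of_mem (Finset.mem_univ j), Finset.card_univ, Fintype.card_fin]
    rw [← Finset.mul_prod_erase Finset.univ (fun k => Mk k ^ (n-1)) (Finset.mem_univ j)]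
    have hpow : Real.sqrt n * Real.sqrt (n:ℝ) ^ (n-1) = Real.sqrt n ^ n := by
      rw [← pow_succ']
      congr 1
      omega
    simp only [if_true]
    rw [← hpow]
    ring
  calc ‖V.det‖ = ‖W.det‖ := by rw [hdet]
    _ ≤ ∏ k, Real.sqrt (∑ t, Complex.normSq (W k t)) := hHad
    _ ≤ ∏ k, B k := hprod
    _ = d * ((n:ℝ) * Real.sqrt n ^ n) * ∏ k, Mk k ^ (n-1) := hBprod

set_option maxHeartbeats 1000000 in
/-- root separation lower bound
    σ_p ≥ √|Disc(p)| · ‖p‖₂^{-(n-1)} · n^{-(n+2)/2}. -/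
theorem stmt1 (n : ℕ) (hn : 2 ≤ n) (p : Polynomial ℝ) (hdeg : p.natDegree = n)
    (hsq : Squarefree p) (z : Fin n → ℂ) (hinj : Function.Injective z)
    (hfact : p.map (algebraMap ℝ ℂ) =
      Polynomial.C ((p.leadingCoeff : ℝ) : ℂ) * ∏ i, (Polynomial.X - Polynomial.C (z i))) :
    ∀ i j : Fin n, i ≠ j →
      Real.sqrt (‖((p.leadingCoeff : ℝ) : ℂ)^(2*n-2) *
          ∏ q ∈ Finset.univ.filter (fun q : Fin n × Fin n => q.1 < q.2), (z q.2 - z q.1)^2‖) *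
        (Real.sqrt (∑ i ∈ Finset.range (n+1), (p.coeff i)^2)) ^ (-((n:ℝ) - 1)) *
        (n:ℝ) ^ (-((n:ℝ) + 2)/2) ≤ ‖z i - z j‖ := by
  intro i j hij
  have hp0 : p ≠ 0 := by
    intro h
    rw [h, Polynomial.natDegree_zero] at hdeg
    omega
  have hlc : p.leadingCoeff ≠ 0 := Polynomial.leadingCoeff_ne_zero.2 hp0
  set a : ℝ := p.leadingCoeff with ha
  have hc0 : ((a : ℂ)) ≠ 0 := Complex.ofReal_ne_zero.2 hlc
  set L := Real.sqrt (∑ i ∈ Finset.range (n+1), (p.coeff i)^2) with hL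
  set Mk : Fin n → ℝ := fun k => max 1 (‖z k‖) with hMk
  have hM1 : ∀ k, 1 ≤ Mk k := fun k => le_max_left _ _
  have hn0 : (0:ℝ) < n := by positivity
  have hnn : (0:ℝ) < (n:ℝ) := by exact_mod_cast (by omega : 0 < n)
  -- sum of squared coefficients
  have hsum_eq : ∑ k ∈ Finset.range (n+1), (p.coeff k)^2
      = ∑ k ∈ Finset.range (n+1),
        Complex.normSq ((C ((a:ℝ):ℂ) * ∏ i, (X - C (z i))).coeff k) := by
    rw [← hfact]
    refine Finset.sum_congr rfl fun k _ => ?_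
    rw [Polynomial.coeff_map,
      show (algebraMap ℝ ℂ) (p.coeff k) = ((p.coeff k : ℝ) : ℂ) from rfl,
      Complex.normSq_ofReal, sq]
  -- Landau
  have hLandau : |a| * ∏ k, Mk k ≤ L := by
    have h := landau (n := n) (by omega) ((a:ℝ):ℂ) hc0 z
    rw [Complex.norm_real, Real.norm_eq_abs] at h
    rw [hL, hsum_eq]
    exact h
  -- Vandermonde det as product over pairs
  have hVdet : ‖(Matrix.vandermonde z).det‖
      = ∏ q ∈ Finset.univ.filter (fun q : Fin n × Fin n => q.1 < q.2),
          ‖z q.2 - z q.1‖ := by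
    rw [Matrix.det_vandermonde, prod_filter_lt_eq (fun q => ‖z q.2 - z q.1‖)]
    rw [norm_prod]
    exact Finset.prod_congr rfl fun k _ => norm_prod _ _
  -- discriminant sqrt
  have hdisc : Real.sqrt (‖((a:ℝ):ℂ)^(2*n-2) *
        ∏ q ∈ Finset.univ.filter (fun q : Fin n × Fin n => q.1 < q.2), (z q.2 - z q.1)^2‖)
      = |a|^(n-1) * ‖(Matrix.vandermonde z).det‖ := by
    rw [norm_mul, norm_pow, norm_prod, Complex.norm_real, Real.norm_eq_abs]
    have hsq2 : ∀ q : Fin n × Fin n, ‖(z q.2 - z q.1)^2‖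
        = (‖z q.2 - z q.1‖)^2 := fun q => norm_pow _ 2
    rw [Finset.prod_congr rfl fun q _ => hsq2 q]
    have h2 : |a|^(2*n-2) * ∏ q ∈ Finset.univ.filter (fun q : Fin n × Fin n => q.1 < q.2),
          (‖z q.2 - z q.1‖)^2
        = (|a|^(n-1) * ∏ q ∈ Finset.univ.filter (fun q : Fin n × Fin n => q.1 < q.2),
            ‖z q.2 - z q.1‖)^2 := by
      rw [mul_pow, ← Finset.prod_pow, ← pow_mul]
      congr 2
      omega
    rw [h2, Real.sqrt_sq (mul_nonneg (pow_nonneg (abs_nonneg a) _)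
      (Finset.prod_nonneg fun q _ => norm_nonneg _)), hVdet]
  -- key bound
  have hkey : ‖(Matrix.vandermonde z).det‖
      ≤ ‖z i - z j‖ * ((n:ℝ) * Real.sqrt n ^ n) * ∏ k, Mk k ^ (n-1) := by
    rcases le_total (‖z i‖) (‖z j‖) with h | h
    · have hb := vandermonde_bound hn z i j hij h
      rwa [norm_sub_rev (z j) (z i)] at hb
    · exact vandermonde_bound hn z j i hij.symm h
  -- positivity of L
  have hL0 : 0 < L := by
    apply Real.sqrt_pos.2
    have hcn : p.coeff n ≠ 0 := by
      rw [← hdeg]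
      exact hlc
    have hpos : 0 < (p.coeff n)^2 := by positivity
    exact lt_of_lt_of_le hpos
      (Finset.single_le_sum (f := fun k => (p.coeff k)^2) (fun k _ => sq_nonneg _)
        (Finset.self_mem_range_succ n))
  -- rpow rewrites
  have hrw1 : L ^ (-((n:ℝ)-1)) = (L ^ (n-1 : ℕ))⁻¹ := by
    rw [← Real.rpow_natCast L (n-1), ← Real.rpow_neg hL0.le]
    congr 1
    push_cast [Nat.cast_sub (by omega : 1 ≤ n)]
    ring
  have hrw2 : (n:ℝ) ^ (-((n:ℝ)+2)/2) = ((n:ℝ) * Real.sqrt n ^ n)⁻¹ := by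
    have h1 : (-((n:ℝ)+2)/2) = -((1/2 : ℝ) * (((n+2:ℕ)):ℝ)) := by push_cast; ring
    rw [h1, Real.rpow_neg hnn.le]
    congr 1
    rw [show (1/2 : ℝ) * (((n+2:ℕ)):ℝ) = (1/2 : ℝ) * (((n+2:ℕ)):ℝ) from rfl,
      Real.rpow_mul hnn.le, Real.rpow_natCast, ← Real.sqrt_eq_rpow]
    rw [pow_add, Real.sq_sqrt hnn.le]
    ring
  -- combine
  have hMprod0 : (0:ℝ) ≤ ∏ k, Mk k := Finset.prod_nonneg fun k _ => le_trans zero_le_one (hM1 k)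
  have hLpow : (|a| * ∏ k, Mk k)^(n-1) ≤ L^(n-1) :=
    pow_le_pow_left₀ (by positivity) hLandau (n-1)
  have hfinal : |a|^(n-1) * ‖(Matrix.vandermonde z).det‖
      ≤ ‖z i - z j‖ * ((n:ℝ) * Real.sqrt n ^ n) * L^(n-1) := by
    calc |a|^(n-1) * ‖(Matrix.vandermonde z).det‖
        ≤ |a|^(n-1) * (‖z i - z j‖ * ((n:ℝ) * Real.sqrt n ^ n) * ∏ k, Mk k ^ (n-1)) :=
          mul_le_mul_of_nonneg_left hkey (by positivity)
      _ = ‖z i - z j‖ * ((n:ℝ) * Real.sqrt n ^ n) * (|a| * ∏ k, Mk k)^(n-1) := by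
          rw [mul_pow, ← Finset.prod_pow]
          ring
      _ ≤ ‖z i - z j‖ * ((n:ℝ) * Real.sqrt n ^ n) * L^(n-1) := by
          apply mul_le_mul_of_nonneg_left hLpow
          have := norm_nonneg (z i - z j)
          positivity
  rw [hdisc, hrw1, hrw2]
  have hsn0 : (0:ℝ) < Real.sqrt n := Real.sqrt_pos.2 hnn
  have hq0 : (0:ℝ) < (n:ℝ) * Real.sqrt n ^ n := by positivity
  have hLp0 : (0:ℝ) < L ^ (n-1) := by positivity
  calc |a|^(n-1) * ‖(Matrix.vandermonde z).det‖ * (L ^ (n-1))⁻¹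
        * ((n:ℝ) * Real.sqrt n ^ n)⁻¹
      ≤ (‖z i - z j‖ * ((n:ℝ) * Real.sqrt n ^ n) * L^(n-1)) * (L ^ (n-1))⁻¹
        * ((n:ℝ) * Real.sqrt n ^ n)⁻¹ := by
        gcongr
    _ = ‖z i - z j‖ := by
        field_simp
end

section
/- For a real polynomial p of degree n with roots z_1,...,z_n and leading coefficient p_n, the discriminant satisfies |Disc(p)| ≤ n^n · Mea(p)^{2n-2}, where Mea(p) is the Mahler measure. -/
open Polynomial Finset
section Aux
open Finset Matrix
open scoped ComplexOrder

/-- AM-GM: nonneg reals summing to n have product ≤ 1. -/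
lemma amgm_prod_le_one {n : ℕ} (hn : 0 < n) (μ : Fin n → ℝ) (h0 : ∀ i, 0 ≤ μ i)
    (hs : ∑ i, μ i = n) : ∏ i, μ i ≤ 1 := by
  have hw : ∑ _i : Fin n, (n : ℝ)⁻¹ = 1 := by
    simp [Finset.sum_const, Finset.card_univ]
    field_simp
  have h := Real.geom_mean_le_arith_mean_weighted Finset.univ (fun _ => (n : ℝ)⁻¹) μ
    (fun i _ => by positivity) hw (fun i _ => h0 i)
  have key : ∏ i, μ i ^ ((n : ℝ)⁻¹) ≤ 1 := by
    refine h.trans_eq ?_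
    rw [← Finset.mul_sum, hs]
    field_simp
  have hrw : ∏ i, μ i = (∏ i, μ i ^ ((n : ℝ)⁻¹)) ^ (n : ℕ) := by
    rw [← Finset.prod_pow]
    refine Finset.prod_congr rfl fun i _ => ?_
    rw [← Real.rpow_natCast (μ i ^ ((n:ℝ)⁻¹)) n, ← Real.rpow_mul (h0 i),
      inv_mul_cancel₀ (by exact_mod_cast hn.ne'), Real.rpow_one]
  rw [hrw]
  exact pow_le_one₀ (Finset.prod_nonneg fun i _ => Real.rpow_nonneg (h0 i) _) key

/-- Trace of a Hermitian complex matrix equals sum of eigenvalues. -/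
lemma trace_eq_sum_eig {n : ℕ} {A : Matrix (Fin n) (Fin n) ℂ} (hA : A.IsHermitian) :
    A.trace = ∑ i, (hA.eigenvalues i : ℂ) := by
  conv_lhs => rw [hA.spectral_theorem, Unitary.conjStarAlgAut_apply]
  rw [Matrix.trace_mul_comm, ← Matrix.mul_assoc,
    (Matrix.mem_unitaryGroup_iff').mp (hA.eigenvectorUnitary).2, Matrix.one_mul,
    Matrix.trace_diagonal]
  rfl

/-- Hadamard-type bound: matrix with unit rows has |det| ≤ 1. -/
lemma normSq_det_le_one {n : ℕ} (hn : 0 < n) (W : Matrix (Fin n) (Fin n) ℂ)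
    (hrow : ∀ i, ∑ j, Complex.normSq (W i j) = 1) :
    Complex.normSq W.det ≤ 1 := by
  have hG : (W * Wᴴ).PosSemidef := Matrix.posSemidef_self_mul_conjTranspose W
  have hH := hG.1
  have htr : (W * Wᴴ).trace = (n : ℂ) := by
    simp only [Matrix.trace, Matrix.diag_apply, Matrix.mul_apply, Matrix.conjTranspose_apply]
    have : ∀ i j : Fin n, W i j * star (W i j) = (Complex.normSq (W i j) : ℂ) := fun i j =>
      Complex.mul_conj _
    simp_rw [this, ← Complex.ofReal_sum, hrow]
    simp
  have hsum : ∑ i, hH.eigenvalues i = n := by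
    have h2 := (trace_eq_sum_eig hH).symm.trans htr
    exact_mod_cast h2
  have hprod : ∏ i, hH.eigenvalues i ≤ 1 :=
    amgm_prod_le_one hn _ hG.eigenvalues_nonneg hsum
  have hdet : ((Complex.normSq W.det : ℝ) : ℂ) = ((∏ i, hH.eigenvalues i : ℝ) : ℂ) := by
    rw [← Complex.mul_conj]
    have h1 : (W * Wᴴ).det = W.det * (starRingEnd ℂ) W.det := by
      rw [Matrix.det_mul, Matrix.det_conjTranspose]; rfl
    rw [← h1, hH.det_eq_prod_eigenvalues]
    push_cast
    rfl
  have := Complex.ofReal_inj.mp hdet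
  linarith

/-- Hadamard bound for the Vandermonde determinant. -/
lemma normSq_det_vandermonde_le {n : ℕ} (hn : 0 < n) (z : Fin n → ℂ) :
    Complex.normSq (Matrix.vandermonde z).det ≤
      ∏ i, ∑ j : Fin n, Complex.normSq (z i ^ (j : ℕ)) := by
  set s : Fin n → ℝ := fun i => ∑ j : Fin n, Complex.normSq (z i ^ (j : ℕ)) with hs
  have hs1 : ∀ i, 1 ≤ s i := by
    intro i
    calc (1 : ℝ) = Complex.normSq (z i ^ (((⟨0, hn⟩ : Fin n) : ℕ))) := by simp
      _ ≤ s i := Finset.single_le_sum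
          (f := fun j : Fin n => Complex.normSq (z i ^ (j : ℕ)))
          (fun j _ => Complex.normSq_nonneg _) (Finset.mem_univ _)
  have hspos : ∀ i, 0 < s i := fun i => lt_of_lt_of_le one_pos (hs1 i)
  set W : Matrix (Fin n) (Fin n) ℂ :=
    Matrix.of fun i j : Fin n => ((Real.sqrt (s i) : ℂ))⁻¹ * z i ^ (j : ℕ) with hW
  have hsq : ∀ i, Complex.normSq ((Real.sqrt (s i) : ℂ)) = s i := fun i => by
    rw [Complex.normSq_ofReal, Real.mul_self_sqrt (hspos i).le]
  have hrow : ∀ i, ∑ j, Complex.normSq (W i j) = 1 := by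
    intro i
    simp only [hW, Matrix.of_apply, _root_.map_mul, map_inv₀, hsq]
    rw [← Finset.mul_sum]
    exact inv_mul_cancel₀ (hspos i).ne'
  have hWdet : W.det = (∏ i, ((Real.sqrt (s i) : ℂ))⁻¹) * (Matrix.vandermonde z).det := by
    have hdiag : W = Matrix.diagonal (fun i => ((Real.sqrt (s i) : ℂ))⁻¹)
        * Matrix.vandermonde z := by
      ext i j
      simp [hW, Matrix.diagonal_mul, Matrix.vandermonde]
    rw [hdiag, Matrix.det_mul, Matrix.det_diagonal]
  have h1 := normSq_det_le_one hn W hrow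
  have h2 : Complex.normSq W.det
      = (∏ i, s i)⁻¹ * Complex.normSq (Matrix.vandermonde z).det := by
    rw [hWdet, _root_.map_mul]
    congr 1
    rw [show Complex.normSq (∏ i, ((Real.sqrt (s i) : ℂ))⁻¹)
        = ∏ i, Complex.normSq (((Real.sqrt (s i) : ℂ))⁻¹) from _root_.map_prod _ _ _]
    simp only [map_inv₀, hsq]
    exact Finset.prod_inv_distrib (f := s) (s := Finset.univ)
  rw [h2] at h1
  have hp : 0 < ∏ i, s i := Finset.prod_pos (fun i _ => hspos i)
  calc Complex.normSq (Matrix.vandermonde z).det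
      = (∏ i, s i) * ((∏ i, s i)⁻¹ * Complex.normSq (Matrix.vandermonde z).det) := by
        field_simp
    _ ≤ (∏ i, s i) * 1 := mul_le_mul_of_nonneg_left h1 hp.le
    _ = ∏ i, s i := mul_one _

lemma prod_pairs_eq {n : ℕ} (g : Fin n → Fin n → ℂ) :
    ∏ q ∈ Finset.univ.filter (fun q : Fin n × Fin n => q.1 < q.2), g q.1 q.2
      = ∏ i, ∏ j ∈ Finset.Ioi i, g i j := by
  rw [Finset.prod_sigma']
  refine Finset.prod_nbij' (fun q => ⟨q.1, q.2⟩) (fun x => (x.1, x.2)) ?_ ?_ ?_ ?_ ?_ <;>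
    simp [Finset.mem_sigma, Finset.mem_filter, Finset.mem_Ioi]
end Aux
open scoped ComplexOrder

/-- |Disc(p)| ≤ n^n · Mea(p)^{2n-2}. -/
theorem stmt2 (n : ℕ) (p : Polynomial ℝ) (hdeg : p.natDegree = n)
    (z : Fin n → ℂ)
    (hfact : p.map (algebraMap ℝ ℂ) =
      Polynomial.C ((p.leadingCoeff : ℝ) : ℂ) * ∏ i, (Polynomial.X - Polynomial.C (z i))) :
    ‖((p.leadingCoeff : ℝ) : ℂ)^(2*n-2) *
        ∏ q ∈ Finset.univ.filter (fun q : Fin n × Fin n => q.1 < q.2), (z q.2 - z q.1)^2‖ ≤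
      (n:ℝ)^n * (|p.leadingCoeff| * ∏ i, max 1 ‖z i‖)^(2*n-2) := by
  rcases Nat.eq_zero_or_pos n with rfl | hn
  · simp
  set c := p.leadingCoeff with hc
  set M : Fin n → ℝ := fun i => max 1 ‖z i‖ with hM
  -- rewrite LHS
  have hdetv := Matrix.det_vandermonde z
  have hLHS : ‖((c : ℝ) : ℂ)^(2*n-2) *
        ∏ q ∈ Finset.univ.filter (fun q : Fin n × Fin n => q.1 < q.2), (z q.2 - z q.1)^2‖
      = |c|^(2*n-2) * Complex.normSq (Matrix.vandermonde z).det := by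
    rw [norm_mul, norm_pow, Complex.norm_real, Real.norm_eq_abs,
      prod_pairs_eq (fun i j => (z j - z i)^2)]
    congr 1
    simp_rw [Finset.prod_pow]
    rw [norm_pow, Complex.sq_norm, ← hdetv]
  have hbound := normSq_det_vandermonde_le hn z
  have hsM : ∀ i, (∑ j : Fin n, Complex.normSq (z i ^ (j : ℕ))) ≤ (n : ℝ) * M i ^ (2*n-2) := by
    intro i
    have hM1 : 1 ≤ M i := le_max_left _ _
    have habs : ‖z i‖ ≤ M i := le_max_right _ _
    have hterm : ∀ j : Fin n, Complex.normSq (z i ^ (j : ℕ)) ≤ M i ^ (2*n-2) := by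
      intro j
      have h1 : Complex.normSq (z i ^ (j : ℕ)) = ‖z i‖ ^ (2 * (j : ℕ)) := by
        rw [← Complex.sq_norm, norm_pow, ← pow_mul, mul_comm]
      rw [h1]
      calc ‖z i‖ ^ (2 * (j : ℕ)) ≤ M i ^ (2 * (j : ℕ)) :=
            pow_le_pow_left₀ (norm_nonneg _) habs _
        _ ≤ M i ^ (2*n-2) := pow_le_pow_right₀ hM1 (by have := j.isLt; omega)
    calc (∑ j : Fin n, Complex.normSq (z i ^ (j : ℕ)))
        ≤ ∑ _j : Fin n, M i ^ (2*n-2) := Finset.sum_le_sum (fun j _ => hterm j)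
      _ = (n : ℝ) * M i ^ (2*n-2) := by
          rw [Finset.sum_const, Finset.card_univ, Fintype.card_fin, nsmul_eq_mul]
  have hstep : ∏ i, (∑ j : Fin n, Complex.normSq (z i ^ (j : ℕ)))
      ≤ (n : ℝ)^n * (∏ i, M i)^(2*n-2) := by
    calc ∏ i, (∑ j : Fin n, Complex.normSq (z i ^ (j : ℕ)))
        ≤ ∏ i, ((n : ℝ) * M i ^ (2*n-2)) :=
          Finset.prod_le_prod
            (fun i _ => Finset.sum_nonneg fun j _ => Complex.normSq_nonneg _)
            (fun i _ => hsM i)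
      _ = (n : ℝ)^n * (∏ i, M i)^(2*n-2) := by
          rw [Finset.prod_mul_distrib, Finset.prod_const, Finset.card_univ, Fintype.card_fin,
            Finset.prod_pow]
  rw [hLHS]
  calc |c|^(2*n-2) * Complex.normSq (Matrix.vandermonde z).det
      ≤ |c|^(2*n-2) * ((n : ℝ)^n * (∏ i, M i)^(2*n-2)) :=
        mul_le_mul_of_nonneg_left (hbound.trans hstep) (pow_nonneg (abs_nonneg _) _)
    _ = (n : ℝ)^n * (|c| * ∏ i, M i)^(2*n-2) := by rw [mul_pow]; ring
end

section
/- Let p be a square-free real polynomial of degree n with roots z_1,...,z_n and leading coefficient |p_n| ≥ 1/4, and let z_k be the root closest to z_i (k ≠ i). Then the separation σ(z_i,p) = |z_i - z_k| satisfies σ(z_i,p) ≥ |p'(z_i)| / (|p_n|·∏_{j≠k,i}|z_j - z_i|) ≥ |p'(z_i)| / (2^{τ_p}·2^{n+1}·max(1,|z_i|)^n). -/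
open Polynomial Finset Complex


lemma swap_one (w : ℂ) (g : ℂ[X]) (N : ℕ) (hg : g.natDegree + 2 ≤ N) :
    ∑ m ∈ range N, normSq (((X - C w) * g).coeff m) =
    ∑ m ∈ range N, normSq (((C (starRingEnd ℂ w) * X - C 1) * g).coeff m) := by
  obtain ⟨K, rfl⟩ : ∃ K, N = K + 1 := ⟨N - 1, by omega⟩
  have hb : ∀ m, K ≤ m → g.coeff m = 0 := fun m hm =>
    coeff_eq_zero_of_natDegree_lt (by omega)
  have hXg : ∀ m, ((X : ℂ[X]) * g).coeff m = if m = 0 then 0 else g.coeff (m - 1) := by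
    intro m
    cases m with
    | zero => simp
    | succ m => simp [coeff_X_mul]
  have hA : ∑ m ∈ range (K+1), normSq (((X:ℂ[X]) * g).coeff m)
      = ∑ m ∈ range (K+1), normSq (g.coeff m) := by
    rw [Finset.sum_range_succ' (fun m => normSq (((X:ℂ[X]) * g).coeff m)) K,
      Finset.sum_range_succ (fun m => normSq (g.coeff m)) K]
    simp [hXg, hb K le_rfl]
  have lhs_expand : ∀ m, normSq (((X - C w) * g).coeff m)
      = normSq (((X:ℂ[X])*g).coeff m) + normSq w * normSq (g.coeff m)
        - 2 * ((((X:ℂ[X])*g).coeff m) * (starRingEnd ℂ w) * (starRingEnd ℂ (g.coeff m))).re := by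
    intro m
    rw [sub_mul, coeff_sub, Complex.normSq_sub]
    simp [coeff_C_mul, map_mul, mul_comm, mul_assoc, mul_left_comm]
  have rhs_expand : ∀ m, normSq (((C (starRingEnd ℂ w) * X - C 1) * g).coeff m)
      = normSq w * normSq (((X:ℂ[X])*g).coeff m) + normSq (g.coeff m)
        - 2 * ((((X:ℂ[X])*g).coeff m) * (starRingEnd ℂ w) * (starRingEnd ℂ (g.coeff m))).re := by
    intro m
    rw [sub_mul, coeff_sub, Complex.normSq_sub]
    rw [mul_assoc, coeff_C_mul]
    simp [map_mul, Complex.normSq_conj, Complex.mul_re, Complex.mul_im, Complex.conj_re, Complex.conj_im]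
    ring
  simp only [lhs_expand, rhs_expand, Finset.sum_sub_distrib, Finset.sum_add_distrib,
    ← Finset.mul_sum, hA]
  ring

lemma swap_prod {ι : Type*} [DecidableEq ι] (T : Finset ι) (w : ι → ℂ) (N : ℕ) :
    ∀ g : ℂ[X], g.natDegree + T.card + 2 ≤ N →
    ∑ m ∈ range N, normSq (((∏ j ∈ T, (X - C (w j))) * g).coeff m) =
    ∑ m ∈ range N, normSq (((∏ j ∈ T, (C (starRingEnd ℂ (w j)) * X - C 1)) * g).coeff m) := by
  induction T using Finset.induction_on with
  | empty => simp
  | @insert a T' ha IH =>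
    intro g hg
    rw [Finset.card_insert_of_notMem ha] at hg
    have hT' : (∏ j ∈ T', (X - C (w j))).natDegree ≤ T'.card := by
      apply le_trans (natDegree_prod_le _ _)
      apply le_trans (Finset.sum_le_card_nsmul _ _ 1 _)
      · simp
      · intro x _; exact natDegree_X_sub_C_le _
    have hlin : (C (starRingEnd ℂ (w a)) * X - C 1).natDegree ≤ 1 := by
      have : C (starRingEnd ℂ (w a)) * X - C 1 = C (starRingEnd ℂ (w a)) * X + C (-1) := by
        rw [map_neg, sub_eq_add_neg]
      rw [this]; exact natDegree_linear_le
    rw [Finset.prod_insert ha, Finset.prod_insert ha, mul_assoc]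
    rw [swap_one (w a) _ N (by
      have := natDegree_mul_le (p := ∏ j ∈ T', (X - C (w j))) (q := g)
      omega)]
    rw [mul_left_comm]
    rw [IH ((C (starRingEnd ℂ (w a)) * X - C 1) * g) (by
      have := natDegree_mul_le (p := C (starRingEnd ℂ (w a)) * X - C 1) (q := g)
      omega)]
    rw [← mul_assoc, mul_comm (∏ j ∈ T', (C (starRingEnd ℂ (w j)) * X - C 1)) (C (starRingEnd ℂ (w a)) * X - C 1)]

lemma landau_s7 {ι : Type*} [DecidableEq ι] (s : Finset ι) (w : ι → ℂ) (c : ℂ) (N : ℕ)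
    (hN : s.card + 2 ≤ N) :
    ‖c‖ * ∏ j ∈ s, max 1 (‖w j‖) ≤
      ∑ m ∈ range N, ‖(C c * ∏ j ∈ s, (X - C (w j))).coeff m‖ := by
  rcases eq_or_ne c 0 with rfl | hc
  · simp only [map_zero, norm_zero, zero_mul]
    exact Finset.sum_nonneg fun m _ => norm_nonneg (_ : ℂ)
  set T := s.filter (fun j => 1 < ‖w j‖) with hT
  have hTsub : T ⊆ s := Finset.filter_subset _ _
  -- LHS rewriting
  have hmax : ∏ j ∈ s, max 1 (‖w j‖) = ∏ j ∈ T, ‖w j‖ := by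
    rw [← Finset.prod_filter_mul_prod_filter_not s (fun j => 1 < ‖w j‖)]
    rw [Finset.prod_congr rfl (fun j hj => max_eq_right (le_of_lt (Finset.mem_filter.mp hj).2)),
      Finset.prod_congr rfl (fun j hj => max_eq_left (not_lt.mp (Finset.mem_filter.mp hj).2)),
      Finset.prod_const_one, mul_one]
  -- split the polynomial
  set g : ℂ[X] := C c * ∏ j ∈ s.filter (fun j => ¬ 1 < ‖w j‖), (X - C (w j)) with hgdef
  have hsplit : C c * ∏ j ∈ s, (X - C (w j)) = (∏ j ∈ T, (X - C (w j))) * g := by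
    rw [hgdef, ← Finset.prod_filter_mul_prod_filter_not s (fun j => 1 < ‖w j‖)]
    ring
  have hgdeg : g.natDegree ≤ (s.filter (fun j => ¬ 1 < ‖w j‖)).card := by
    refine le_trans (natDegree_mul_le) ?_
    simp only [natDegree_C, zero_add]
    refine le_trans (natDegree_prod_le _ _) ?_
    refine le_trans (Finset.sum_le_card_nsmul _ _ 1 (fun x _ => natDegree_X_sub_C_le _)) (by simp)
  have hcard : T.card + (s.filter (fun j => ¬ 1 < ‖w j‖)).card = s.card := by
    rw [hT, Finset.card_filter_add_card_filter_not]
  -- swap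
  have hswap := swap_prod T w N g (by omega)
  -- the swapped polynomial
  set q : ℂ[X] := (∏ j ∈ T, (C (starRingEnd ℂ (w j)) * X - C 1)) * g with hqdef
  have hwne : ∀ j ∈ T, starRingEnd ℂ (w j) ≠ 0 := by
    intro j hj h
    have h0 : w j = 0 := by
      have := congrArg (starRingEnd ℂ) h
      simpa using this
    have h1 := (Finset.mem_filter.mp hj).2
    rw [h0] at h1; norm_num at h1
  have hlinform : ∀ j : ι, C (starRingEnd ℂ (w j)) * X - C 1
      = C (starRingEnd ℂ (w j)) * X + C (-1) := by
    intro j; rw [map_neg, sub_eq_add_neg]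
  -- coeff of q at s.card equals leading coeff
  have hgne : g ≠ 0 := by
    rw [hgdef]
    apply mul_ne_zero (by simpa using hc)
    apply Finset.prod_ne_zero_iff.mpr
    intro j _; exact X_sub_C_ne_zero _
  have hlinne : ∀ j ∈ T, C (starRingEnd ℂ (w j)) * X - C 1 ≠ 0 := by
    intro j hj h
    apply hwne j hj
    have := congrArg (fun p : ℂ[X] => p.coeff 1) h
    simpa [coeff_sub, coeff_C_mul, coeff_one] using this
  have hprodne : (∏ j ∈ T, (C (starRingEnd ℂ (w j)) * X - C 1)) ≠ 0 :=
    Finset.prod_ne_zero_iff.mpr hlinne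
  have hgdeg2 : g.natDegree = (s.filter (fun j => ¬ 1 < ‖w j‖)).card := by
    rw [hgdef, natDegree_mul (by simpa using hc) (Finset.prod_ne_zero_iff.mpr
      (fun j _ => X_sub_C_ne_zero _)), natDegree_C, zero_add,
      natDegree_prod _ _ (fun j _ => X_sub_C_ne_zero _)]
    simp [natDegree_X_sub_C]
  have hproddeg : (∏ j ∈ T, (C (starRingEnd ℂ (w j)) * X - C 1)).natDegree = T.card := by
    rw [natDegree_prod _ _ hlinne]
    rw [Finset.sum_congr rfl (fun j hj => by
      rw [hlinform j, natDegree_linear (hwne j hj)])]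
    simp
  have hqdeg : q.natDegree = s.card := by
    rw [hqdef, natDegree_mul hprodne hgne, hproddeg, hgdeg2, hcard]
  have hqlead : ‖q.coeff s.card‖ = ‖c‖ * ∏ j ∈ T, ‖w j‖ := by
    have : q.coeff s.card = q.leadingCoeff := by rw [leadingCoeff, hqdeg]
    rw [this, hqdef, leadingCoeff_mul, leadingCoeff_prod]
    have hg : g.leadingCoeff = c := by
      rw [hgdef, leadingCoeff_mul, leadingCoeff_C, leadingCoeff_prod]
      simp [leadingCoeff_X_sub_C]
    rw [hg, Finset.prod_congr rfl (fun j hj => by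
      rw [hlinform j, leadingCoeff_linear (hwne j hj)])]
    rw [norm_mul, norm_prod]
    simp [mul_comm]
  -- assemble
  have h1 : (‖c‖ * ∏ j ∈ s, max 1 (‖w j‖))^2
      = normSq (q.coeff s.card) := by
    rw [hmax, ← hqlead, Complex.sq_norm]
  have h2 : normSq (q.coeff s.card) ≤ ∑ m ∈ range N, normSq (q.coeff m) := by
    apply Finset.single_le_sum (f := fun m => normSq (q.coeff m))
    · intro m _; exact normSq_nonneg _
    · exact Finset.mem_range.mpr (by omega)
  have h3 : ∑ m ∈ range N, normSq (q.coeff m)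
      = ∑ m ∈ range N, normSq ((C c * ∏ j ∈ s, (X - C (w j))).coeff m) := by
    rw [hsplit, hswap]
  have h4 : ∑ m ∈ range N, normSq ((C c * ∏ j ∈ s, (X - C (w j))).coeff m)
      ≤ (∑ m ∈ range N, ‖(C c * ∏ j ∈ s, (X - C (w j))).coeff m‖)^2 := by
    have hF : ∀ m ∈ range N, normSq ((C c * ∏ j ∈ s, (X - C (w j))).coeff m)
        ≤ ‖(C c * ∏ j ∈ s, (X - C (w j))).coeff m‖ *
          ∑ m' ∈ range N, ‖(C c * ∏ j ∈ s, (X - C (w j))).coeff m'‖ := by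
      intro m hm
      rw [← Complex.sq_norm, sq]
      refine mul_le_mul_of_nonneg_left ?_ (norm_nonneg _)
      exact Finset.single_le_sum
        (f := fun m' => ‖(C c * ∏ j ∈ s, (X - C (w j))).coeff m'‖)
        (fun m _ => norm_nonneg _) hm
    refine le_trans (Finset.sum_le_sum hF) ?_
    rw [← Finset.sum_mul, sq]
  have hL : 0 ≤ ‖c‖ * ∏ j ∈ s, max 1 (‖w j‖) := by
    apply mul_nonneg (norm_nonneg _)
    exact Finset.prod_nonneg (fun j _ => le_trans zero_le_one (le_max_left _ _))
  have hR : 0 ≤ ∑ m ∈ range N, ‖(C c * ∏ j ∈ s, (X - C (w j))).coeff m‖ :=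
    Finset.sum_nonneg fun m _ => norm_nonneg _
  nlinarith [h1, h2, h3, h4]

lemma derivative_finset_prod {ι : Type*} [DecidableEq ι] (s : Finset ι) (f : ι → ℂ[X]) :
    derivative (∏ j ∈ s, f j) = ∑ j ∈ s, (∏ a ∈ s.erase j, f a) * derivative (f j) := by
  induction s using Finset.induction_on with
  | empty => simp
  | @insert a s ha IH =>
    rw [Finset.prod_insert ha, derivative_mul, IH, Finset.sum_insert ha,
      Finset.erase_insert ha]
    have h2 : ∑ j ∈ s, (∏ b ∈ (insert a s).erase j, f b) * derivative (f j)
        = f a * ∑ j ∈ s, (∏ b ∈ s.erase j, f b) * derivative (f j) := by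
      rw [Finset.mul_sum]
      refine Finset.sum_congr rfl (fun j hj => ?_)
      rw [Finset.erase_insert_of_ne (by rintro rfl; exact ha hj),
        Finset.prod_insert (fun h => ha (Finset.mem_of_mem_erase h)), mul_assoc]
    rw [h2]; ring

/-- σ(z_i,p) ≥ |p'(z_i)|/(|p_n|·∏_{j≠k,i}|z_j-z_i|)
    ≥ |p'(z_i)|/(2^{τ_p}·2^{n+1}·max(1,|z_i|)^n), where z_k is the root closest to z_i. -/
theorem stmt7 (n : ℕ) (hn : 2 ≤ n) (p : Polynomial ℝ) (hdeg : p.natDegree = n)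
    (hsq : Squarefree p) (hlc : 1/4 ≤ |p.leadingCoeff|)
    (z : Fin n → ℂ)
    (hfact : p.map (algebraMap ℝ ℂ) =
      Polynomial.C ((p.leadingCoeff : ℝ) : ℂ) * ∏ i, (Polynomial.X - Polynomial.C (z i)))
    (i k : Fin n) (hki : k ≠ i)
    (hmin : ∀ j : Fin n, j ≠ i → ‖z i - z k‖ ≤ ‖z i - z j‖)
    (τ : ℝ) (hτ : τ = max 1 (Real.logb 2
      ((Finset.range (n+1)).sup' (by simp) (fun j => |p.coeff j|)))) :
    ‖(Polynomial.aeval (z i)) (Polynomial.derivative p)‖ /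
        ((2:ℝ)^τ * 2^(n+1) * max 1 (‖z i‖)^n) ≤
      ‖(Polynomial.aeval (z i)) (Polynomial.derivative p)‖ /
        (|p.leadingCoeff| * ∏ j ∈ (Finset.univ.erase i).erase k, ‖z j - z i‖) ∧
    ‖(Polynomial.aeval (z i)) (Polynomial.derivative p)‖ /
        (|p.leadingCoeff| * ∏ j ∈ (Finset.univ.erase i).erase k, ‖z j - z i‖) ≤
      ‖z i - z k‖ := by
  classical
  set c : ℂ := ((p.leadingCoeff : ℝ) : ℂ) with hcdef
  set H : ℝ := (Finset.range (n+1)).sup' (by simp) (fun j => |p.coeff j|) with hHdef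
  set M : ℝ := max 1 (‖z i‖) with hMdef
  have hM1 : (1:ℝ) ≤ M := le_max_left _ _
  have habsc : ‖c‖ = |p.leadingCoeff| := (Complex.norm_real _).trans (Real.norm_eq_abs _)
  have hcpos : (0:ℝ) < |p.leadingCoeff| := lt_of_lt_of_le (by norm_num) hlc
  have hH : |p.leadingCoeff| ≤ H := by
    have : p.leadingCoeff = p.coeff n := by rw [← hdeg]; rfl
    rw [this]
    exact Finset.le_sup' (f := fun j => |p.coeff j|) (Finset.mem_range.mpr (by omega))
  have hHpos : 0 < H := lt_of_lt_of_le hcpos hH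
  have hHτ : H ≤ (2:ℝ)^τ := by
    rw [hτ]
    calc H = (2:ℝ) ^ Real.logb 2 H := (Real.rpow_logb (by norm_num) (by norm_num) hHpos).symm
    _ ≤ (2:ℝ) ^ max 1 (Real.logb 2 H) :=
      Real.rpow_le_rpow_of_exponent_le (by norm_num) (le_max_right _ _)
  have hτ2 : (0:ℝ) < (2:ℝ)^τ := Real.rpow_pos_of_pos (by norm_num) _
  -- derivative evaluation
  have hderiv : (Polynomial.aeval (z i)) (Polynomial.derivative p)
      = c * ∏ j ∈ Finset.univ.erase i, (z i - z j) := by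
    rw [aeval_def, ← eval_map, ← derivative_map, hfact, derivative_C_mul,
      derivative_finset_prod]
    simp only [derivative_X_sub_C, mul_one, eval_mul, eval_C, eval_finset_sum,
      eval_prod, eval_sub, eval_X]
    congr 1
    rw [Finset.sum_eq_single i]
    · intro j _ hj
      exact Finset.prod_eq_zero (Finset.mem_erase.mpr ⟨Ne.symm hj, Finset.mem_univ i⟩)
        (by simp)
    · intro h; exact absurd (Finset.mem_univ i) h
  set D2 : ℝ := |p.leadingCoeff| * ∏ j ∈ (Finset.univ.erase i).erase k, ‖z j - z i‖
    with hD2def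
  set σ : ℝ := ‖z i - z k‖ with hσdef
  have hA : ‖(Polynomial.aeval (z i)) (Polynomial.derivative p)‖ = D2 * σ := by
    rw [hderiv, norm_mul, habsc]
    rw [show ‖∏ j ∈ Finset.univ.erase i, (z i - z j)‖
        = ∏ j ∈ Finset.univ.erase i, ‖z i - z j‖ from norm_prod _ _]
    rw [← Finset.mul_prod_erase (Finset.univ.erase i)
      (fun j => ‖z i - z j‖) (Finset.mem_erase.mpr ⟨hki, Finset.mem_univ k⟩)]
    rw [Finset.prod_congr rfl (fun j _ => (norm_sub_rev (z i) (z j)))]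
    ring
  have hD2nonneg : 0 ≤ D2 := by
    apply mul_nonneg (le_of_lt hcpos)
    exact Finset.prod_nonneg (fun j _ => norm_nonneg _)
  -- the key bound D2 ≤ D1
  set q : ℂ[X] := C c * ∏ j, (X - C (z j - z i)) with hqdef
  have hq : q = (p.map (algebraMap ℝ ℂ)).comp (X + C (z i)) := by
    have hfac : ∀ j : Fin n, (X - C (z j)).comp (X + C (z i)) = X - C (z j - z i) := by
      intro j
      rw [sub_comp, X_comp, C_comp, map_sub]
      ring
    rw [hfact, mul_comp, C_comp,
      Polynomial.prod_comp Finset.univ (fun j => X - C (z j)) (X + C (z i)),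
      Finset.prod_congr rfl (fun j _ => hfac j)]
  -- coefficient bound for q
  have hqcoeff : ∀ m, ‖q.coeff m‖
      ≤ ∑ l ∈ range (n+1), |p.coeff l| * M^n * (l.choose m : ℝ) := by
    intro m
    have hdegP : (p.map (algebraMap ℝ ℂ)).natDegree = n := by
      rw [Polynomial.natDegree_map, hdeg]
    have hcomp : (p.map (algebraMap ℝ ℂ)).comp (X + C (z i))
        = ∑ l ∈ range (n+1), C ((p.map (algebraMap ℝ ℂ)).coeff l) * (X + C (z i))^l := by
      rw [comp_eq_sum_left]
      exact Polynomial.sum_over_range' _ (fun l => by simp) (n+1) (by omega)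
    rw [hq, hcomp, finset_sum_coeff]
    refine le_trans (norm_sum_le _ _) ?_
    refine Finset.sum_le_sum (fun l hl => ?_)
    rw [coeff_C_mul, coeff_X_add_C_pow, norm_mul, norm_mul]
    rw [Polynomial.coeff_map]
    have h1 : ‖(algebraMap ℝ ℂ) (p.coeff l)‖ = |p.coeff l| := (Complex.norm_real _).trans (Real.norm_eq_abs _)
    have h2 : ‖(z i)^(l - m)‖ ≤ M^n := by
      rw [norm_pow]
      calc ‖z i‖ ^ (l - m) ≤ M ^ (l - m) :=
        pow_le_pow_left₀ (norm_nonneg _) (le_max_right _ _) _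
      _ ≤ M ^ n := pow_le_pow_right₀ hM1 (by
          have := Finset.mem_range.mp hl; omega)
    have h3 : ‖(l.choose m : ℂ)‖ = (l.choose m : ℝ) := Complex.norm_natCast _
    rw [h1, h3]
    calc |p.coeff l| * (‖(z i)^(l-m)‖ * (l.choose m : ℝ))
        ≤ |p.coeff l| * (M^n * (l.choose m : ℝ)) := by
          refine mul_le_mul_of_nonneg_left ?_ (abs_nonneg _)
          exact mul_le_mul_of_nonneg_right h2 (by positivity)
    _ = |p.coeff l| * M^n * (l.choose m : ℝ) := by ring
  -- sum the coefficient bounds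
  have hsum : ∑ m ∈ range (n+2), ‖q.coeff m‖
      ≤ H * M^n * (2^(n+1) - 1) := by
    calc ∑ m ∈ range (n+2), ‖q.coeff m‖
        ≤ ∑ m ∈ range (n+2), ∑ l ∈ range (n+1), |p.coeff l| * M^n * (l.choose m : ℝ) :=
          Finset.sum_le_sum (fun m _ => hqcoeff m)
    _ = ∑ l ∈ range (n+1), ∑ m ∈ range (n+2), |p.coeff l| * M^n * (l.choose m : ℝ) :=
          Finset.sum_comm
    _ ≤ ∑ l ∈ range (n+1), H * M^n * 2^l := by
          refine Finset.sum_le_sum (fun l hl => ?_)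
          rw [← Finset.mul_sum]
          have hchoose : ∑ m ∈ range (n+2), (l.choose m : ℝ) = 2^l := by
            rw [← Finset.sum_subset (Finset.range_subset_range.mpr
              (by have := Finset.mem_range.mp hl; omega : l + 1 ≤ n + 2))
              (fun x _ hx => by
                rw [Nat.choose_eq_zero_of_lt (by simpa using hx)]; simp)]
            rw [← Nat.cast_sum, Nat.sum_range_choose]
            push_cast; ring
          rw [hchoose]
          have hpl : |p.coeff l| ≤ H := Finset.le_sup' (f := fun j => |p.coeff j|) hl
          have h2l : (0:ℝ) ≤ 2^l := by positivity
          have hMn0 : (0:ℝ) ≤ M^n := pow_nonneg (le_trans zero_le_one hM1) n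
          exact mul_le_mul_of_nonneg_right
            (mul_le_mul_of_nonneg_right hpl hMn0) h2l
    _ = H * M^n * ∑ l ∈ range (n+1), 2^l := by rw [Finset.mul_sum]
    _ = H * M^n * (2^(n+1) - 1) := by
          rw [geom_sum_eq (by norm_num : (2:ℝ) ≠ 1)]
          norm_num
  -- Landau
  have hlandau := landau_s7 (Finset.univ : Finset (Fin n)) (fun j => z j - z i) c (n+2)
    (by simp)
  have hD2le : D2 ≤ (2:ℝ)^τ * 2^(n+1) * M^n := by
    have step1 : D2 ≤ ‖c‖ * ∏ j, max 1 (‖z j - z i‖) := by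
      rw [hD2def, ← habsc]
      refine mul_le_mul_of_nonneg_left ?_ (norm_nonneg _)
      calc ∏ j ∈ (Finset.univ.erase i).erase k, ‖z j - z i‖
          ≤ ∏ j ∈ (Finset.univ.erase i).erase k, max 1 (‖z j - z i‖) :=
            Finset.prod_le_prod (fun j _ => norm_nonneg _)
              (fun j _ => le_max_right _ _)
      _ ≤ ∏ j, max 1 (‖z j - z i‖) := by
            rw [← Finset.prod_sdiff (Finset.subset_univ ((Finset.univ.erase i).erase k))]
            refine le_mul_of_one_le_left
              (Finset.prod_nonneg (fun j _ => le_trans zero_le_one (le_max_left _ _))) ?_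
            calc (1:ℝ) = ∏ _j ∈ Finset.univ \ (Finset.univ.erase i).erase k, (1:ℝ) := by simp
            _ ≤ ∏ j ∈ Finset.univ \ (Finset.univ.erase i).erase k,
                max 1 (‖z j - z i‖) :=
              Finset.prod_le_prod (fun j _ => zero_le_one) (fun j _ => le_max_left _ _)
    have step2 := hlandau
    have step3 : (∑ m ∈ range (n+2),
        ‖(C c * ∏ j, (X - C (z j - z i))).coeff m‖) ≤ H * M^n * (2^(n+1) - 1) := by
      exact hsum
    have hMn : (0:ℝ) < M^n := by positivity
    have h2n : (0:ℝ) < 2^(n+1) := by positivity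
    calc D2 ≤ ‖c‖ * ∏ j, max 1 (‖z j - z i‖) := step1
    _ ≤ ∑ m ∈ range (n+2), ‖(C c * ∏ j, (X - C (z j - z i))).coeff m‖ := step2
    _ ≤ H * M^n * (2^(n+1) - 1) := step3
    _ ≤ H * M^n * 2^(n+1) := by
        refine mul_le_mul_of_nonneg_left (by linarith) (by positivity)
    _ = M^n * 2^(n+1) * H := by ring
    _ ≤ M^n * 2^(n+1) * (2:ℝ)^τ := mul_le_mul_of_nonneg_left hHτ (by positivity)
    _ = (2:ℝ)^τ * 2^(n+1) * M^n := by ring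
  -- conclusion
  constructor
  · rw [hA]
    rcases eq_or_lt_of_le hD2nonneg with h0 | hpos
    · rw [← h0]; simp
    · exact div_le_div_of_nonneg_left
        (mul_nonneg (le_of_lt hpos) (norm_nonneg _)) hpos hD2le
  · rw [hA]
    rcases eq_or_lt_of_le hD2nonneg with h0 | hpos
    · rw [← h0]; simp
      exact norm_nonneg _
    · rw [mul_comm, mul_div_assoc, div_self (ne_of_gt hpos), mul_one]
end

section
/- Correspondence between Möbius-transform coefficients and Bernstein coefficients: Let I = (a,b), let P(x) = Σ_{i=0}^n b_i B_i^n[a,b](x) be the Bernstein representation of P of degree n with respect to I, where B_i^n[a,b](x) = C(n,i)·(x-a)^i(b-x)^{n-i}/(b-a)^n, and let P_I(x) = Σ p_{I,i} x^i = (x+1)^n P((ax+b)/(x+1)). Then p_{I,i} = b_{n-i}·C(n,i) for all i = 0,...,n. In particular, var(P,I) equals the number of sign variations in (b_0,...,b_n). -/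
open Polynomial Finset

open Classical in
/-- Number of sign variations in the coefficient sequence (f 0, ..., f N). -/
noncomputable def signVar (f : ℕ → ℝ) (N : ℕ) : ℕ :=
  ((Finset.range (N+1) ×ˢ Finset.range (N+1)).filter
    (fun q => q.1 < q.2 ∧ f q.1 * f q.2 < 0 ∧ ∀ l ∈ Finset.Ioo q.1 q.2, f l = 0)).card

/-- The Möbius-transformed polynomial P_I(x) = (x+1)^n · P((ax+b)/(x+1)). -/
noncomputable def mobius (P : Polynomial ℝ) (n : ℕ) (a b : ℝ) : Polynomial ℝ :=
  ∑ i ∈ Finset.range (n+1),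
    Polynomial.C (P.coeff i) * (Polynomial.C a * Polynomial.X + Polynomial.C b)^i *
      (Polynomial.X + 1)^(n-i)

/-- var(P,(a,b)) = number of sign variations in the coefficient sequence of P_I. -/
noncomputable def var (P : Polynomial ℝ) (n : ℕ) (a b : ℝ) : ℕ :=
  signVar (fun i => (mobius P n a b).coeff i) n

/-- The Bernstein basis polynomial B_i^n[a,b](x) = C(n,i)(x-a)^i(b-x)^{n-i}/(b-a)^n. -/
noncomputable def bern (n i : ℕ) (a b : ℝ) : Polynomial ℝ :=
  Polynomial.C ((n.choose i : ℝ) / (b-a)^n) * (Polynomial.X - Polynomial.C a)^i *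
    (Polynomial.C b - Polynomial.X)^(n-i)

/-- Sign variations are invariant under reversal and positive scaling. -/
lemma signVar_flip (f g : ℕ → ℝ) (n : ℕ) (c : ℕ → ℝ) (hc : ∀ i ≤ n, 0 < c i)
    (hfg : ∀ i ≤ n, f i = g (n - i) * c i) : signVar f n = signVar g n := by
  classical
  unfold signVar
  have key : ∀ (q : ℕ × ℕ),
      q ∈ (Finset.range (n+1) ×ˢ Finset.range (n+1)).filter
        (fun q => q.1 < q.2 ∧ f q.1 * f q.2 < 0 ∧ ∀ l ∈ Finset.Ioo q.1 q.2, f l = 0) →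
      (n - q.2, n - q.1) ∈ (Finset.range (n+1) ×ˢ Finset.range (n+1)).filter
        (fun q => q.1 < q.2 ∧ g q.1 * g q.2 < 0 ∧ ∀ l ∈ Finset.Ioo q.1 q.2, g l = 0) := by
    intro q hq
    simp only [Finset.mem_filter, Finset.mem_product, Finset.mem_range] at hq ⊢
    obtain ⟨⟨h1, h2⟩, hlt, hneg, hz⟩ := hq
    have hq1 : q.1 ≤ n := by omega
    have hq2 : q.2 ≤ n := by omega
    refine ⟨⟨by omega, by omega⟩, by omega, ?_, ?_⟩
    · rw [hfg q.1 hq1, hfg q.2 hq2] at hneg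
      have hc1 := hc q.1 hq1
      have hc2 := hc q.2 hq2
      nlinarith [mul_pos hc1 hc2, mul_neg_of_neg_of_pos hneg (mul_pos hc1 hc2)]
    · intro l hl
      simp only [Finset.mem_Ioo] at hl
      have hl' : n - l ∈ Finset.Ioo q.1 q.2 := by
        simp only [Finset.mem_Ioo]; omega
      have := hz (n - l) hl'
      rw [hfg (n - l) (by omega)] at this
      have hcl := hc (n - l) (by omega)
      have hnl : n - (n - l) = l := by omega
      rw [hnl] at this
      rcases mul_eq_zero.mp this with h | h
      · exact h
      · exact absurd h hcl.ne'
  refine Finset.card_bij' (fun q _ => (n - q.2, n - q.1)) (fun q _ => (n - q.2, n - q.1))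
    key ?_ ?_ ?_
  · intro q hq
    simp only [Finset.mem_filter, Finset.mem_product, Finset.mem_range] at hq ⊢
    obtain ⟨⟨h1, h2⟩, hlt, hneg, hz⟩ := hq
    have hq1 : q.1 ≤ n := by omega
    have hq2 : q.2 ≤ n := by omega
    refine ⟨⟨by omega, by omega⟩, by omega, ?_, ?_⟩
    · rw [hfg (n - q.2) (by omega), hfg (n - q.1) (by omega)]
      rw [show n - (n - q.2) = q.2 by omega, show n - (n - q.1) = q.1 by omega]
      have hc1 := hc (n - q.1) (by omega)
      have hc2 := hc (n - q.2) (by omega)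
      nlinarith [mul_pos hc2 hc1, mul_neg_of_neg_of_pos hneg (mul_pos hc2 hc1)]
    · intro l hl
      simp only [Finset.mem_Ioo] at hl
      have hl' : n - l ∈ Finset.Ioo q.1 q.2 := by
        simp only [Finset.mem_Ioo]; omega
      rw [hfg l (by omega), hz (n - l) hl', zero_mul]
  · intro q hq
    simp only [Finset.mem_filter, Finset.mem_product, Finset.mem_range] at hq
    have : q.1 ≤ n ∧ q.2 ≤ n := ⟨by omega, by omega⟩
    ext <;> simp <;> omega
  · intro q hq
    simp only [Finset.mem_filter, Finset.mem_product, Finset.mem_range] at hq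
    have : q.1 ≤ n ∧ q.2 ≤ n := ⟨by omega, by omega⟩
    ext <;> simp <;> omega

/-- p_{I,i} = b_{n-i}·C(n,i), hence var(P,I) equals the number of
    sign variations of the Bernstein coefficient sequence. -/
theorem stmt10 (P : Polynomial ℝ) (n : ℕ) (hdeg : P.natDegree = n)
    (a b : ℝ) (hab : a < b) (β : ℕ → ℝ)
    (hrep : P = ∑ i ∈ Finset.range (n+1), Polynomial.C (β i) * bern n i a b) :
    (∀ i ≤ n, (mobius P n a b).coeff i = β (n-i) * (n.choose i : ℝ)) ∧
    var P n a b = signVar (fun i => β i) n := by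
  have hb : b - a ≠ 0 := sub_ne_zero.2 hab.ne'
  have key : mobius P n a b
      = ∑ i ∈ Finset.range (n+1), Polynomial.C (β i * n.choose i) * Polynomial.X ^ (n-i) := by
    apply Polynomial.eq_of_infinite_eval_eq
    apply Set.Infinite.mono (s := {(-1 : ℝ)}ᶜ)
    · intro x hx
      have hx1 : x + 1 ≠ 0 := by
        simp only [Set.mem_compl_iff, Set.mem_singleton_iff] at hx
        intro h; apply hx; linarith
      obtain ⟨t, htx, hta, htb⟩ : ∃ t : ℝ, a * x + b = (x + 1) * t ∧
          t - a = (b - a) / (x + 1) ∧ b - t = (b - a) * x / (x + 1) :=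
        ⟨(a * x + b) / (x + 1), by field_simp, by field_simp; ring, by field_simp; ring⟩
      show (mobius P n a b).eval x = _
      have e1 : (mobius P n a b).eval x = (x+1)^n * P.eval t := by
        simp only [mobius, eval_finset_sum, eval_mul, eval_pow, eval_add, eval_C, eval_X,
          eval_one]
        rw [Polynomial.eval_eq_sum_range' (by omega : P.natDegree < n+1) t, Finset.mul_sum]
        apply Finset.sum_congr rfl
        intro i hi
        have hi' : i ≤ n := by simpa [Nat.lt_succ_iff] using hi
        obtain ⟨e, rfl⟩ : ∃ e, n = i + e := ⟨n - i, by omega⟩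
        rw [htx, mul_pow, show i + e - i = e by omega, pow_add]
        ring
      rw [e1, hrep]
      rw [eval_finset_sum, Finset.mul_sum, eval_finset_sum]
      apply Finset.sum_congr rfl
      intro i hi
      have hi' : i ≤ n := by simpa [Nat.lt_succ_iff] using hi
      simp only [eval_mul, eval_C, eval_pow, eval_sub, eval_X, bern]
      rw [hta, htb]
      obtain ⟨e, rfl⟩ : ∃ e, n = i + e := ⟨n - i, by omega⟩
      rw [show i + e - i = e by omega]
      simp only [div_pow, mul_pow, pow_add]
      field_simp
    · exact Set.Finite.infinite_compl (Set.finite_singleton _)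
  have hcoeff : ∀ i ≤ n, (mobius P n a b).coeff i = β (n-i) * (n.choose i : ℝ) := by
    intro j hj
    rw [key, Polynomial.finset_sum_coeff]
    simp only [Polynomial.coeff_C_mul, Polynomial.coeff_X_pow]
    rw [Finset.sum_eq_single (n - j)]
    · rw [show n - (n - j) = j by omega, if_pos rfl, Nat.choose_symm hj]
      ring
    · intro i hi hne
      simp only [Finset.mem_range] at hi
      rw [if_neg (by omega), mul_zero]
    · intro h
      exact absurd (Finset.mem_range.2 (by omega)) h
  refine ⟨hcoeff, ?_⟩
  unfold var
  exact signVar_flip _ _ n (fun i => (n.choose i : ℝ))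
    (fun i hi => by simpa using (Nat.cast_pos.mpr (Nat.choose_pos hi) : (0:ℝ) < n.choose i))
    (fun i hi => hcoeff i hi)
end

section
/- One-circle theorem: Let P be a real polynomial of degree n and I = (a,b) an open interval. If the open disk Δ(I) in the complex plane with center (a+b)/2 and radius (b-a)/2 contains no root of P, then var(P, I) = 0. -/
open Polynomial Finset

private lemma coeff_mul_nonneg {p q : ℝ[X]} (hp : ∀ k, 0 ≤ p.coeff k) (hq : ∀ k, 0 ≤ q.coeff k)
    (k : ℕ) : 0 ≤ (p * q).coeff k := by
  rw [Polynomial.coeff_mul]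
  exact Finset.sum_nonneg fun x _ => mul_nonneg (hp _) (hq _)

private lemma key : ∀ (N : ℕ) (Q : ℝ[X]), Q.natDegree = N → 0 < Q.leadingCoeff →
    (∀ z : ℂ, aeval z Q = 0 → z.re ≤ 0) → ∀ k, 0 ≤ Q.coeff k := by
  intro N
  induction N using Nat.strong_induction_on with
  | _ N ih =>
    intro Q hN hlc hroots k
    rcases Nat.eq_zero_or_pos N with h0 | hpos
    · subst h0
      rw [Polynomial.eq_C_of_natDegree_eq_zero hN]
      rcases Nat.eq_zero_or_pos k with rfl | hk
      · simp only [coeff_C_zero]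
        have := hlc
        rw [Polynomial.leadingCoeff, hN] at this
        exact this.le
      · simp [Polynomial.coeff_C, hk.ne']
    · have hQ0 : Q ≠ 0 := fun h => by simp [h] at hlc
      have hdeg0 : Q.degree ≠ 0 := by
        rw [Polynomial.degree_eq_natDegree hQ0, hN]
        exact_mod_cast hpos.ne'
      obtain ⟨z, hz⟩ : ∃ z : ℂ, aeval z Q = 0 :=
        IsAlgClosed.exists_aeval_eq_zero ℂ Q hdeg0
      rcases eq_or_ne z.im 0 with him | him
      · -- real root
        have hre : z.re ≤ 0 := hroots z hz
        have hzr : z = (z.re : ℂ) := Complex.ext rfl (by simp [him])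
        have hroot : Q.IsRoot z.re := by
          have : (algebraMap ℝ ℂ) (aeval z.re Q) = 0 := by
            rw [← Polynomial.aeval_algebraMap_apply]
            simpa [← hzr] using hz
          exact (map_eq_zero_iff _ (algebraMap ℝ ℂ).injective).mp this
        obtain ⟨Q₁, hQ₁⟩ := (Polynomial.dvd_iff_isRoot.mpr hroot)
        have hQ₁0 : Q₁ ≠ 0 := fun h => hQ0 (by simp [hQ₁, h])
        have hXC : (X - C z.re) ≠ (0 : ℝ[X]) := Polynomial.X_sub_C_ne_zero z.re
        have hdm : N = 1 + Q₁.natDegree := by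
          rw [← hN, hQ₁, Polynomial.natDegree_mul hXC hQ₁0, Polynomial.natDegree_X_sub_C]
        have hlc1 : 0 < Q₁.leadingCoeff := by
          have : Q.leadingCoeff = Q₁.leadingCoeff := by
            rw [hQ₁, Polynomial.leadingCoeff_mul, Polynomial.leadingCoeff_X_sub_C, one_mul]
          rwa [this] at hlc
        have hr1 : ∀ w : ℂ, aeval w Q₁ = 0 → w.re ≤ 0 := by
          intro w hw
          apply hroots w
          rw [hQ₁, map_mul, hw, mul_zero]
        have hcoeffs1 : ∀ j, 0 ≤ Q₁.coeff j :=
          ih Q₁.natDegree (by omega) Q₁ rfl hlc1 hr1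
        have hcoeffX : ∀ j, 0 ≤ (X - C z.re).coeff j := by
          intro j
          match j with
          | 0 => simp [hre]
          | 1 => simp
          | (j+2) => simp [Polynomial.coeff_X, Polynomial.coeff_C]
        rw [hQ₁]
        exact coeff_mul_nonneg hcoeffX hcoeffs1 k
      · -- complex root, quadratic factor
        have hre : z.re ≤ 0 := hroots z hz
        set D : ℝ[X] := X ^ 2 - C (2 * z.re) * X + C (‖z‖ ^ 2) with hD
        obtain ⟨Q₂, hQ₂⟩ := Polynomial.quadratic_dvd_of_aeval_eq_zero_im_ne_zero Q hz him
        have hDmonic : D.Monic := by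
          unfold D
          monicity!
        have hD0 : D ≠ 0 := hDmonic.ne_zero
        have hQ₂0 : Q₂ ≠ 0 := fun h => hQ0 (by simp [hQ₂, h])
        have hDdeg : D.natDegree = 2 := by
          unfold D
          compute_degree!
        have hdm : N = 2 + Q₂.natDegree := by
          rw [← hN, hQ₂, Polynomial.natDegree_mul hD0 hQ₂0, hDdeg]
        have hlc2 : 0 < Q₂.leadingCoeff := by
          have : Q.leadingCoeff = Q₂.leadingCoeff := by
            rw [hQ₂, Polynomial.leadingCoeff_mul, hDmonic.leadingCoeff, one_mul]
          rwa [this] at hlc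
        have hr2 : ∀ w : ℂ, aeval w Q₂ = 0 → w.re ≤ 0 := by
          intro w hw
          apply hroots w
          rw [hQ₂, map_mul, hw, mul_zero]
        have hcoeffs2 : ∀ j, 0 ≤ Q₂.coeff j :=
          ih Q₂.natDegree (by omega) Q₂ rfl hlc2 hr2
        have hcoeffD : ∀ j, 0 ≤ D.coeff j := by
          intro j
          match j with
          | 0 => simp only [hD, coeff_add, coeff_sub, coeff_C_mul, coeff_C, coeff_X_pow,
              if_neg, if_pos]; norm_num
          | 1 => simp only [hD, coeff_add, coeff_sub, coeff_C_mul, coeff_C, coeff_X_pow,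
              coeff_X_one]; norm_num; linarith
          | 2 => simp only [hD, coeff_add, coeff_sub, coeff_C_mul, coeff_C, coeff_X_pow,
              coeff_X]; norm_num
          | (j+3) => simp only [hD, coeff_add, coeff_sub, coeff_C_mul, coeff_C, coeff_X_pow,
              coeff_X]; norm_num; rw [if_neg (by omega)]
        rw [hQ₂]
        exact coeff_mul_nonneg hcoeffD hcoeffs2 k
/-- one-circle theorem. If the open disk with center (a+b)/2 and radius
    (b-a)/2 contains no complex root of P, then var(P,(a,b)) = 0. -/
theorem stmt12 (P : Polynomial ℝ) (n : ℕ) (hdeg : P.natDegree = n) (hP : P ≠ 0)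
    (a b : ℝ) (hab : a < b)
    (hnoroot : ∀ w : ℂ, ‖w - (((a+b)/2 : ℝ) : ℂ)‖ < (b-a)/2 →
      (Polynomial.aeval w) P ≠ 0) :
    var P n a b = 0 := by
  set M := mobius P n a b with hM
  have heval : ∀ z : ℂ, aeval z M = ∑ i ∈ Finset.range (n+1),
      (algebraMap ℝ ℂ) (P.coeff i) * ((a:ℂ) * z + (b:ℂ)) ^ i * (z + 1) ^ (n - i) := by
    intro z
    simp [hM, mobius, map_sum, map_mul, map_pow, map_add]
  have hroots : ∀ z : ℂ, aeval z M = 0 → z.re ≤ 0 := by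
    intro z hz
    by_contra hzre
    push_neg at hzre
    have hz1 : z + 1 ≠ 0 := by
      intro h
      have : (z + 1).re = 0 := by rw [h]; simp
      simp only [Complex.add_re, Complex.one_re] at this
      linarith
    set w : ℂ := ((a:ℂ) * z + (b:ℂ)) / (z + 1) with hw
    have hterm : ∀ i ∈ Finset.range (n+1),
        (algebraMap ℝ ℂ) (P.coeff i) * ((a:ℂ)*z+(b:ℂ))^i * (z+1)^(n-i)
        = (z+1)^n * ((algebraMap ℝ ℂ) (P.coeff i) * w^i) := by
      intro i hi
      rw [Finset.mem_range] at hi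
      have hsplit : (z+1)^n = (z+1)^i * (z+1)^(n-i) := by
        rw [← pow_add]; congr 1; omega
      rw [hsplit, hw, div_pow]
      field_simp
    have haw : aeval w P = ∑ i ∈ Finset.range (n+1), (algebraMap ℝ ℂ) (P.coeff i) * w ^ i := by
      rw [Polynomial.aeval_eq_sum_range, hdeg]
      exact Finset.sum_congr rfl fun i _ => by rw [Algebra.smul_def]
    have hfact : aeval z M = (z+1)^n * aeval w P := by
      rw [heval z, Finset.sum_congr rfl hterm, ← Finset.mul_sum, haw]
    rw [hz] at hfact
    have hPw : aeval w P = 0 := by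
      rcases mul_eq_zero.mp hfact.symm with h | h
      · exact absurd h (pow_ne_zero _ hz1)
      · exact h
    apply hnoroot w _ hPw
    have hwm : w - ((((a+b)/2 : ℝ)) : ℂ) = ((b-a : ℝ) : ℂ) * (1 - z) / (2 * (z+1)) := by
      rw [hw]
      push_cast
      field_simp
      ring
    have h1 : ‖1 - z‖ < ‖z + 1‖ := by
      apply lt_of_pow_lt_pow_left₀ 2 (norm_nonneg _)
      rw [Complex.sq_norm, Complex.sq_norm]
      simp only [Complex.normSq_apply, Complex.sub_re, Complex.sub_im, Complex.add_re,
        Complex.add_im, Complex.one_re, Complex.one_im]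
      nlinarith [hzre]
    have habs1 : 0 < ‖z+1‖ := norm_pos_iff.mpr hz1
    rw [hwm, norm_div, norm_mul, norm_mul, Complex.norm_real, Real.norm_eq_abs, Complex.norm_two,
      abs_of_pos (by linarith : (0:ℝ) < b - a)]
    rw [div_lt_div_iff₀ (by positivity) (by norm_num)]
    nlinarith [norm_nonneg (1 - z)]
  have hsign : ∀ i j : ℕ, 0 ≤ M.coeff i * M.coeff j := by
    rcases eq_or_ne M 0 with h | h
    · intro i j; simp [h]
    · rcases lt_or_gt_of_ne (Polynomial.leadingCoeff_ne_zero.mpr h) with hneg | hposlc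
      · have hn : ∀ k, 0 ≤ (-M).coeff k := by
          apply key (-M).natDegree (-M) rfl
          · rw [Polynomial.leadingCoeff_neg]; linarith
          · intro z hzz
            apply hroots z
            rw [map_neg, neg_eq_zero] at hzz
            exact hzz
        intro i j
        have hi := hn i; have hj := hn j
        rw [Polynomial.coeff_neg] at hi hj
        exact mul_nonneg_of_nonpos_of_nonpos (by linarith) (by linarith)
      · have hp := key M.natDegree M rfl hposlc hroots
        intro i j; exact mul_nonneg (hp i) (hp j)
  unfold var signVar
  rw [Finset.card_eq_zero, Finset.filter_eq_empty_iff]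
  rintro ⟨i, j⟩ -
  rintro ⟨-, h2, -⟩
  exact absurd h2 (not_lt.mpr (hsign i j))
end

section
/- If the one-circle region Δ(I) of an interval I = (a,b) contains a real root z of a square-free real polynomial P whose separation σ(z,P) exceeds 2(b-a), then var(P,I) = 1. -/
open Polynomial Finset

namespace S14

/-! ### Algebraic identities for `mobius` -/

lemma mob_eq (a b : ℝ) (P : Polynomial ℝ) (n : ℕ) (hP : P.natDegree ≤ n) :
    algebraMap (Polynomial ℝ) (RatFunc ℝ) (mobius P n a b) =
      (algebraMap (Polynomial ℝ) (RatFunc ℝ) (X+1))^n *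
        Polynomial.aeval
          (algebraMap (Polynomial ℝ) (RatFunc ℝ) (C a * X + C b) /
           algebraMap (Polynomial ℝ) (RatFunc ℝ) (X+1)) P := by
  set φ := algebraMap (Polynomial ℝ) (RatFunc ℝ) with hφ
  have hX : (X + 1 : Polynomial ℝ) ≠ 0 := by
    intro h
    have := congrArg (fun p => Polynomial.coeff p 1) h
    simp [Polynomial.coeff_one] at this
  have hT : φ (X+1) ≠ 0 := RatFunc.algebraMap_ne_zero hX
  rw [Polynomial.aeval_eq_sum_range' (Nat.lt_succ_of_le hP)]
  rw [mobius, map_sum, Finset.mul_sum]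
  refine Finset.sum_congr rfl ?_
  intro i hi
  have hi' : i ≤ n := Nat.lt_succ_iff.mp (Finset.mem_range.mp hi)
  rw [map_mul, map_mul, map_pow, map_pow, Algebra.smul_def]
  have hC : algebraMap ℝ (RatFunc ℝ) (P.coeff i) = φ (C (P.coeff i)) := by
    rw [hφ, ← Polynomial.algebraMap_eq (R := ℝ), ← IsScalarTower.algebraMap_apply]
  rw [hC, div_pow]
  rw [eq_comm]
  have hsplit : φ (X+1) ^ n = φ (X+1) ^ i * φ (X+1) ^ (n-i) := by
    rw [← pow_add, Nat.add_sub_cancel' hi']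
  rw [hsplit]
  field_simp

lemma mob_mul (a b : ℝ) (P Q : Polynomial ℝ) (m k : ℕ) (h1 : P.natDegree ≤ m)
    (h2 : Q.natDegree ≤ k) :
    mobius (P*Q) (m+k) a b = mobius P m a b * mobius Q k a b := by
  apply RatFunc.algebraMap_injective ℝ
  rw [map_mul, mob_eq a b _ _ (natDegree_mul_le.trans (add_le_add h1 h2)),
    mob_eq a b _ _ h1, mob_eq a b _ _ h2, map_mul, pow_add]
  ring

lemma mob_C_mul (a b c : ℝ) (P : Polynomial ℝ) (n : ℕ) :
    mobius (C c * P) n a b = C c * mobius P n a b := by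
  rw [mobius, mobius, Finset.mul_sum]
  refine Finset.sum_congr rfl fun i _ => ?_
  rw [coeff_C_mul, C_mul]
  ring

lemma mob_one (a b : ℝ) : mobius 1 0 a b = 1 := by
  simp [mobius]

lemma mob_linear (a b r : ℝ) : mobius (X - C r) 1 a b = C (a - r) * X + C (b - r) := by
  rw [mobius]
  rw [Finset.sum_range_succ, Finset.sum_range_succ, Finset.sum_range_zero]
  norm_num
  ring

lemma mob_quad (a b s t : ℝ) :
    mobius (X^2 - C (2*s) * X + C (s^2+t^2)) 2 a b =
      C ((a-s)^2+t^2) * X^2 + C (2*((s-a)*(s-b)+t^2)) * X + C ((b-s)^2+t^2) := by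
  rw [mobius]
  rw [Finset.sum_range_succ, Finset.sum_range_succ, Finset.sum_range_succ,
    Finset.sum_range_zero]
  simp only [coeff_add, coeff_sub, coeff_C_mul, coeff_X_pow, coeff_C, coeff_X]
  norm_num
  simp only [C_add, C_sub, C_mul, C_pow, map_ofNat]
  ring

lemma natDegree_mob_le (a b : ℝ) (P : Polynomial ℝ) (n : ℕ) :
    (mobius P n a b).natDegree ≤ n := by
  refine (natDegree_sum_le _ _).trans ?_
  rw [Finset.fold_max_le]
  refine ⟨Nat.zero_le _, fun i hi => ?_⟩
  have hi' : i ≤ n := Nat.lt_succ_iff.mp (Finset.mem_range.mp hi)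
  refine natDegree_mul_le.trans ?_
  have h1 : (C (P.coeff i) * (C a * X + C b) ^ i).natDegree ≤ i := by
    refine natDegree_mul_le.trans ?_
    simp only [natDegree_C, zero_add]
    exact (natDegree_pow_le).trans (by
      nlinarith [natDegree_linear_le (a := a) (b := b)])
  have h2 : ((X + 1 : Polynomial ℝ) ^ (n - i)).natDegree ≤ n - i := by
    refine (natDegree_pow_le).trans ?_
    have : (X + 1 : Polynomial ℝ).natDegree ≤ 1 := by
      simpa using natDegree_linear_le (a := (1:ℝ)) (b := 1)
    nlinarith
  omega

/-! ### Sign-change patterns -/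

def SCP (g : Polynomial ℝ) : Prop :=
  ∃ t : ℕ, (∀ k ≤ t, 0 ≤ g.coeff k) ∧ ∀ k, t < k → g.coeff k ≤ 0

def SCP2 (g : Polynomial ℝ) : Prop := SCP g ∨ SCP (-g)

lemma SCP2_neg {g : Polynomial ℝ} (h : SCP2 g) : SCP2 (-g) :=
  h.elim (fun h1 => Or.inr (by rwa [neg_neg])) Or.inl

lemma SCP_C_mul {c : ℝ} (hc : 0 < c) {g : Polynomial ℝ} (h : SCP g) : SCP (C c * g) := by
  obtain ⟨t, h1, h2⟩ := h
  exact ⟨t, fun k hk => by rw [coeff_C_mul]; exact mul_nonneg hc.le (h1 k hk),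
    fun k hk => by rw [coeff_C_mul]; exact mul_nonpos_of_nonneg_of_nonpos hc.le (h2 k hk)⟩

lemma SCP2_C_mul {c : ℝ} (hc : c ≠ 0) {g : Polynomial ℝ} (h : SCP2 g) : SCP2 (C c * g) := by
  rcases lt_or_gt_of_ne hc with hneg | hpos
  · have : C c * g = -(C (-c) * g) := by rw [map_neg]; ring
    rw [this]
    refine SCP2_neg (h.elim (fun h1 => Or.inl (SCP_C_mul (by linarith) h1))
      (fun h1 => Or.inr ?_))
    rw [show -(C (-c) * g) = C (-c) * -g by ring]
    exact SCP_C_mul (by linarith) h1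
  · refine h.elim (fun h1 => Or.inl (SCP_C_mul hpos h1)) (fun h1 => Or.inr ?_)
    rw [show -(C c * g) = C c * -g by ring]
    exact SCP_C_mul hpos h1

lemma coeff_lin_zero (u : ℝ) (g : Polynomial ℝ) :
    ((X + C u) * g).coeff 0 = u * g.coeff 0 := by
  rw [mul_coeff_zero]; simp

lemma coeff_lin_succ (u : ℝ) (g : Polynomial ℝ) (k : ℕ) :
    ((X + C u) * g).coeff (k+1) = g.coeff k + u * g.coeff (k+1) := by
  rw [add_mul, coeff_add, coeff_X_mul, coeff_C_mul]

lemma SCP_linear {u : ℝ} (hu : 0 ≤ u) {g : Polynomial ℝ} (h : SCP g) :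
    SCP ((X + C u) * g) := by
  obtain ⟨t, h1, h2⟩ := h
  by_cases hx : 0 ≤ ((X + C u) * g).coeff (t+1)
  · refine ⟨t+1, fun k hk => ?_, fun k hk => ?_⟩
    · rcases k with _ | k
      · rw [coeff_lin_zero]; exact mul_nonneg hu (h1 0 (Nat.zero_le t))
      · rcases Nat.lt_succ_iff_lt_or_eq.mp (Nat.lt_succ_of_le hk) with hlt | heq
        · rw [coeff_lin_succ]
          have hk1 : k ≤ t := by omega
          have hk2 : k + 1 ≤ t := by omega
          exact add_nonneg (h1 k hk1) (mul_nonneg hu (h1 (k+1) hk2))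
        · rw [heq]; exact hx
    · rcases k with _ | k
      · omega
      · rw [coeff_lin_succ]
        have hk1 : t < k := by omega
        have hk2 : t < k + 1 := by omega
        exact add_nonpos (h2 k hk1) (mul_nonpos_of_nonneg_of_nonpos hu (h2 (k+1) hk2))
  · refine ⟨t, fun k hk => ?_, fun k hk => ?_⟩
    · rcases k with _ | k
      · rw [coeff_lin_zero]; exact mul_nonneg hu (h1 0 (Nat.zero_le t))
      · rw [coeff_lin_succ]
        exact add_nonneg (h1 k (by omega)) (mul_nonneg hu (h1 (k+1) hk))
    · rcases k with _ | k
      · omega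
      · rcases Nat.lt_or_ge t k with hlt | hge
        · rw [coeff_lin_succ]
          exact add_nonpos (h2 k hlt) (mul_nonpos_of_nonneg_of_nonpos hu (h2 (k+1) (by omega)))
        · have : k = t := by omega
          subst this
          linarith [not_le.mp hx]

lemma SCP2_linear {u : ℝ} (hu : 0 ≤ u) {g : Polynomial ℝ} (h : SCP2 g) :
    SCP2 ((X + C u) * g) := by
  refine h.elim (fun h1 => Or.inl (SCP_linear hu h1)) (fun h1 => Or.inr ?_)
  rw [show -((X + C u) * g) = (X + C u) * -g by ring]
  exact SCP_linear hu h1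

lemma coeff_quad_zero (p q : ℝ) (g : Polynomial ℝ) :
    ((X^2 + C p * X + C q) * g).coeff 0 = q * g.coeff 0 := by
  rw [mul_coeff_zero]; simp

lemma coeff_quad_one (p q : ℝ) (g : Polynomial ℝ) :
    ((X^2 + C p * X + C q) * g).coeff 1 = p * g.coeff 0 + q * g.coeff 1 := by
  rw [show (1:ℕ) = 0+1 from rfl, add_mul, add_mul, coeff_add, coeff_add, sq,
    mul_assoc, mul_assoc, coeff_X_mul, coeff_C_mul, coeff_X_mul, coeff_C_mul,
    mul_coeff_zero]
  simp

lemma coeff_quad_succ (p q : ℝ) (g : Polynomial ℝ) (k : ℕ) :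
    ((X^2 + C p * X + C q) * g).coeff (k+2) =
      g.coeff k + p * g.coeff (k+1) + q * g.coeff (k+2) := by
  rw [show k+2 = (k+1)+1 from rfl, add_mul, add_mul, coeff_add, coeff_add, sq,
    mul_assoc, mul_assoc, coeff_X_mul, coeff_X_mul, coeff_C_mul, coeff_X_mul,
    coeff_C_mul]

lemma SCP_quad {p q : ℝ} (hp : 0 ≤ p) (hq : 0 ≤ q) (hpq : q ≤ p^2) {g : Polynomial ℝ}
    (h : SCP g) : SCP ((X^2 + C p * X + C q) * g) := by
  obtain ⟨t, hA, hB⟩ := h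
  set g1 := (X^2 + C p * X + C q) * g with hg1
  have hpre : ∀ k ≤ t, 0 ≤ g1.coeff k := by
    intro k hk
    match k, hk with
    | 0, _ => rw [hg1, coeff_quad_zero]; exact mul_nonneg hq (hA 0 (Nat.zero_le t))
    | 1, hk =>
      rw [hg1, coeff_quad_one]
      exact add_nonneg (mul_nonneg hp (hA 0 (Nat.zero_le t))) (mul_nonneg hq (hA 1 hk))
    | (k+2), hk =>
      rw [hg1, coeff_quad_succ]
      exact add_nonneg (add_nonneg (hA k (by omega)) (mul_nonneg hp (hA (k+1) (by omega))))
        (mul_nonneg hq (hA (k+2) hk))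
  have hsuf : ∀ k, t + 2 < k → g1.coeff k ≤ 0 := by
    intro k hk
    match k, hk with
    | (k+2), hk =>
      rw [hg1, coeff_quad_succ]
      exact add_nonpos (add_nonpos (hB k (by omega))
        (mul_nonpos_of_nonneg_of_nonpos hp (hB (k+1) (by omega))))
        (mul_nonpos_of_nonneg_of_nonpos hq (hB (k+2) (by omega)))
  by_cases h1 : 0 ≤ g1.coeff (t+1)
  · by_cases h2 : 0 ≤ g1.coeff (t+2)
    · refine ⟨t+2, fun k hk => ?_, hsuf⟩
      rcases Nat.lt_or_ge k (t+1) with hlt | hge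
      · exact hpre k (by omega)
      · rcases Nat.lt_or_ge k (t+2) with hlt2 | hge2
        · have : k = t+1 := by omega
          rw [this]; exact h1
        · have : k = t+2 := by omega
          rw [this]; exact h2
    · refine ⟨t+1, fun k hk => ?_, fun k hk => ?_⟩
      · rcases Nat.lt_or_ge k (t+1) with hlt | hge
        · exact hpre k (by omega)
        · have : k = t+1 := by omega
          rw [this]; exact h1
      · rcases Nat.lt_or_ge (t+2) k with hlt | hge
        · exact hsuf k hlt
        · have : k = t+2 := by omega
          rw [this]; linarith [not_le.mp h2]
  · by_cases h2 : 0 ≤ g1.coeff (t+2)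
    · exfalso
      push_neg at h1
      rcases Nat.eq_zero_or_pos t with ht0 | htpos
      · subst ht0
        rw [hg1, coeff_quad_one] at h1
        rw [hg1, coeff_quad_succ] at h2
        have e0 : 0 ≤ g.coeff 0 := hA 0 le_rfl
        have e1 : g.coeff 1 ≤ 0 := hB 1 (by omega)
        have e2 : g.coeff 2 ≤ 0 := hB 2 (by omega)
        nlinarith [mul_nonpos_of_nonneg_of_nonpos (mul_nonneg hp hq) e2,
          mul_nonpos_of_nonneg_of_nonpos (sub_nonneg.2 hpq) e1,
          mul_le_mul_of_nonneg_left h2 hp]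
      · obtain ⟨τ, rfl⟩ : ∃ τ, t = τ + 1 := ⟨t - 1, by omega⟩
        rw [hg1, show τ + 1 + 1 = τ + 2 from rfl, coeff_quad_succ] at h1
        rw [hg1, show τ + 1 + 2 = (τ+1) + 2 from rfl, coeff_quad_succ] at h2
        have e0 : 0 ≤ g.coeff τ := hA τ (by omega)
        have e1 : 0 ≤ g.coeff (τ+1) := hA (τ+1) le_rfl
        have e2 : g.coeff (τ+2) ≤ 0 := hB (τ+2) (by omega)
        have e3 : g.coeff (τ+3) ≤ 0 := hB (τ+3) (by omega)
        nlinarith [mul_nonpos_of_nonneg_of_nonpos (mul_nonneg hp hq) e3,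
          mul_nonpos_of_nonneg_of_nonpos (sub_nonneg.2 hpq) e2,
          mul_le_mul_of_nonneg_left h2 hp]
    · refine ⟨t, hpre, fun k hk => ?_⟩
      rcases Nat.lt_or_ge (t+2) k with hlt | hge
      · exact hsuf k hlt
      · rcases Nat.lt_or_ge k (t+2) with hlt2 | hge2
        · have : k = t+1 := by omega
          rw [this]; linarith [not_le.mp h1]
        · have : k = t+2 := by omega
          rw [this]; linarith [not_le.mp h2]

lemma SCP2_quad {p q : ℝ} (hp : 0 ≤ p) (hq : 0 ≤ q) (hpq : q ≤ p^2) {g : Polynomial ℝ}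
    (h : SCP2 g) : SCP2 ((X^2 + C p * X + C q) * g) := by
  refine h.elim (fun h1 => Or.inl (SCP_quad hp hq hpq h1)) (fun h1 => Or.inr ?_)
  rw [show -((X^2 + C p * X + C q) * g) = (X^2 + C p * X + C q) * -g by ring]
  exact SCP_quad hp hq hpq h1

/-! ### Counting sign variations -/

lemma signVar_neg (f : ℕ → ℝ) (N : ℕ) : signVar (fun k => -f k) N = signVar f N := by
  classical
  unfold signVar
  congr 1
  apply Finset.filter_congr
  intro q _
  simp [neg_mul_neg]

lemma signVar_eq_one {f : ℕ → ℝ} {N : ℕ}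
    (hS : ∃ t : ℕ, (∀ k ≤ t, 0 ≤ f k) ∧ ∀ k, t < k → f k ≤ 0)
    (h0 : 0 < f 0) (hN : f N < 0) : signVar f N = 1 := by
  classical
  obtain ⟨t, h1, h2⟩ := hS
  set A := (Finset.range (N+1)).filter (fun i => 0 < f i) with hA
  set B := (Finset.range (N+1)).filter (fun i => f i < 0) with hB
  have hNpos : 0 < N := by
    rcases Nat.eq_zero_or_pos N with h | h
    · subst h; linarith
    · exact h
  have hAne : A.Nonempty := ⟨0, by simp [hA, h0]⟩
  have hBne : B.Nonempty := ⟨N, by simp [hB, hN]⟩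
  set i0 := A.max' hAne with hi0
  set j0 := B.min' hBne with hj0
  have hi0mem := A.max'_mem hAne
  have hj0mem := B.min'_mem hBne
  have hi0pos : 0 < f i0 := (Finset.mem_filter.mp hi0mem).2
  have hj0neg : f j0 < 0 := (Finset.mem_filter.mp hj0mem).2
  have hi0rng : i0 < N + 1 := Finset.mem_range.mp (Finset.mem_filter.mp hi0mem).1
  have hj0rng : j0 < N + 1 := Finset.mem_range.mp (Finset.mem_filter.mp hj0mem).1
  have hi0t : i0 ≤ t := by
    by_contra hc
    exact absurd (h2 i0 (by omega)) (not_le.mpr hi0pos)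
  have hj0t : t < j0 := by
    by_contra hc
    exact absurd (h1 j0 (by omega)) (not_le.mpr hj0neg)
  have hij : i0 < j0 := by omega
  have hzero : ∀ l ∈ Finset.Ioo i0 j0, f l = 0 := by
    intro l hl
    obtain ⟨hl1, hl2⟩ := Finset.mem_Ioo.mp hl
    have hlrng : l < N + 1 := by omega
    rcases lt_trichotomy (f l) 0 with hc | hc | hc
    · exact absurd (Finset.min'_le B l (by simp [hB, hc, hlrng])) (by omega)
    · exact hc
    · exact absurd (Finset.le_max' A l (by simp [hA, hc, hlrng])) (by omega)
  unfold signVar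
  rw [Finset.card_eq_one]
  refine ⟨(i0, j0), ?_⟩
  ext q
  simp only [Finset.mem_filter, Finset.mem_product, Finset.mem_range,
    Finset.mem_singleton]
  constructor
  · rintro ⟨⟨hq1, hq2⟩, hlt, hmul, hz⟩
    have hfi : 0 < f q.1 := by
      rcases lt_trichotomy (f q.1) 0 with hc | hc | hc
      · exfalso
        have hq1t : t < q.1 := by
          by_contra hcc
          exact absurd (h1 q.1 (by omega)) (not_le.mpr hc)
        have : f q.2 ≤ 0 := h2 q.2 (by omega)
        nlinarith
      · exfalso; rw [hc] at hmul; nlinarith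
      · exact hc
    have hfj : f q.2 < 0 := by nlinarith
    have hq1le : q.1 ≤ i0 := Finset.le_max' A q.1 (by simp [hA, hfi, hq1])
    have hq2ge : j0 ≤ q.2 := Finset.min'_le B q.2 (by simp [hB, hfj, hq2])
    have he1 : q.1 = i0 := by
      by_contra hc
      have : i0 ∈ Finset.Ioo q.1 q.2 := Finset.mem_Ioo.mpr ⟨by omega, by omega⟩
      exact absurd (hz i0 this) (ne_of_gt hi0pos)
    have he2 : q.2 = j0 := by
      by_contra hc
      have : j0 ∈ Finset.Ioo q.1 q.2 := Finset.mem_Ioo.mpr ⟨by omega, by omega⟩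
      exact absurd (hz j0 this) (ne_of_lt hj0neg)
    exact Prod.ext he1 he2
  · rintro rfl
    exact ⟨⟨hi0rng, hj0rng⟩, hij, mul_neg_of_pos_of_neg hi0pos hj0neg, hzero⟩

/-! ### The sector inequality -/

lemma sector {a b z s t : ℝ} (hza : a < z) (hzb : z < b)
    (hd : (2*(b-a))^2 < (z-s)^2 + t^2) :
    0 < (s-a)*(s-b) + t^2 ∧
      (b-a)^2 * t^2 ≤ 3*((s-a)*(s-b)+t^2)^2 := by
  have key : t^2 + (b-a)^2 ≤ 2*((s-a)*(s-b)+t^2) := by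
    nlinarith [sq_nonneg (s + z - a - b), mul_pos (sub_pos.2 hza) (sub_pos.2 hzb)]
  have hApos : 0 < (s-a)*(s-b) + t^2 := by nlinarith [sq_nonneg t, sq_nonneg (b-a)]
  refine ⟨hApos, ?_⟩
  have hsq : (t^2 + (b-a)^2)^2 ≤ (2*((s-a)*(s-b)+t^2))^2 := by
    apply sq_le_sq'
    · nlinarith [sq_nonneg t, sq_nonneg (b-a)]
    · exact key
  nlinarith [sq_nonneg (t^2 - (b-a)^2), hsq]


/-! ### The key induction -/

lemma natDegree_E_mob_le (a b z : ℝ) (Q : Polynomial ℝ) (m : ℕ) :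
    ((C (a-z) * X + C (b-z)) * mobius Q m a b).natDegree ≤ m + 1 := by
  refine natDegree_mul_le.trans ?_
  have h1 := natDegree_linear_le (a := a - z) (b := b - z)
  have h2 := natDegree_mob_le a b Q m
  omega

set_option maxHeartbeats 1000000 in
lemma key (a b z : ℝ) (hza : a < z) (hzb : z < b) :
    ∀ m : ℕ, ∀ Q : Polynomial ℝ, Q.Monic → Q.natDegree = m →
      (∀ w : ℂ, Polynomial.aeval w Q = 0 → 2*(b-a) < ‖(z:ℂ) - w‖) →
      SCP2 ((C (a-z) * X + C (b-z)) * mobius Q m a b) ∧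
      ((C (a-z) * X + C (b-z)) * mobius Q m a b).coeff 0 *
        ((C (a-z) * X + C (b-z)) * mobius Q m a b).coeff (m+1) < 0 := by
  intro m
  induction m using Nat.strong_induction_on with
  | _ m IH =>
  intro Q hmon hdegQ hroots
  rcases Nat.eq_zero_or_pos m with hm0 | hmpos
  · subst hm0
    have hQ1 : Q = 1 := hmon.natDegree_eq_zero.mp hdegQ
    subst hQ1
    rw [mob_one, mul_one]
    have hc0 : (C (a-z) * X + C (b-z)).coeff 0 = b - z := by simp
    have hc1 : (C (a-z) * X + C (b-z)).coeff 1 = a - z := by simp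
    constructor
    · left
      refine ⟨0, fun k hk => ?_, fun k hk => ?_⟩
      · interval_cases k
        rw [hc0]; linarith
      · rcases k with _|_|k
        · omega
        · rw [hc1]; linarith
        · rw [coeff_eq_zero_of_natDegree_lt
            (lt_of_le_of_lt natDegree_linear_le (by omega))]
    · rw [zero_add, hc0, hc1]
      nlinarith
  · -- inductive step
    have hQ0 : Q ≠ 0 := hmon.ne_zero
    have hmap0 : Q.map (algebraMap ℝ ℂ) ≠ 0 := by
      intro h
      exact hQ0 (Polynomial.map_injective _ (algebraMap ℝ ℂ).injective (by simp [h]))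
    have hmapdeg : (Q.map (algebraMap ℝ ℂ)).natDegree = m := by
      rw [Polynomial.natDegree_map, hdegQ]
    have hdegpos : 0 < (Q.map (algebraMap ℝ ℂ)).degree := by
      rw [Polynomial.degree_eq_natDegree hmap0, hmapdeg]
      exact_mod_cast hmpos
    obtain ⟨w, hw⟩ := Complex.exists_root hdegpos
    have hwQ : Polynomial.aeval w Q = 0 := by
      rw [Polynomial.aeval_def, ← Polynomial.eval_map]; exact hw
    set E : Polynomial ℝ := C (a-z) * X + C (b-z) with hE
    by_cases him : w.im = 0
    · -- real root case
      set r := w.re with hr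
      have hwr : w = (r:ℂ) := Complex.ext rfl (by simp [him])
      have hevalr : Q.eval r = 0 := by
        have h2 : Polynomial.aeval ((r:ℂ)) Q = algebraMap ℝ ℂ (Q.eval r) := by
          rw [← Complex.coe_algebraMap]
          exact Polynomial.aeval_algebraMap_apply_eq_algebraMap_eval r Q
        rw [hwr] at hwQ
        rw [hwQ] at h2
        have h3 : ((Q.eval r : ℝ) : ℂ) = 0 := by
          rw [← Complex.coe_algebraMap]; exact h2.symm
        exact_mod_cast h3
      obtain ⟨Q', hQ'⟩ := Polynomial.dvd_iff_isRoot.mpr hevalr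
      have hmon' : Q'.Monic :=
        (monic_X_sub_C r).of_mul_monic_left (hQ' ▸ hmon)
      have hQ'0 : Q' ≠ 0 := hmon'.ne_zero
      have hdegQ' : Q'.natDegree = m - 1 := by
        have h := hdegQ
        rw [hQ', natDegree_mul (X_sub_C_ne_zero r) hQ'0, natDegree_X_sub_C] at h
        omega
      have hroots' : ∀ w' : ℂ, Polynomial.aeval w' Q' = 0 →
          2*(b-a) < ‖(z:ℂ) - w'‖ := by
        intro w' hw'
        apply hroots
        rw [hQ', map_mul, hw', mul_zero]
      obtain ⟨hS', hc'⟩ := IH (m-1) (by omega) Q' hmon' hdegQ' hroots'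
      have hrabs : 2*(b-a) < |z - r| := by
        have h := hroots ((r:ℂ)) (by rw [← hwr]; exact hwQ)
        have hcast : ((z:ℂ) - (r:ℂ)) = ((z - r : ℝ) : ℂ) := by push_cast; ring
        rwa [hcast, Complex.norm_real, Real.norm_eq_abs] at h
      have hrar : r < a ∨ b < r := by
        rcases lt_or_ge r a with h | h
        · exact Or.inl h
        · rcases lt_or_ge b r with h' | h'
          · exact Or.inr h'
          · exfalso
            have : |z - r| ≤ b - a := abs_le.mpr ⟨by linarith, by linarith⟩
            linarith
      have hcne : (a - r) ≠ 0 := by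
        rcases hrar with h | h
        · exact (by linarith : (0:ℝ) < a - r).ne'
        · exact (by linarith : a - r < 0).ne
      obtain ⟨u, hupos, hcu⟩ : ∃ u : ℝ, 0 < u ∧ (a - r) * u = b - r := by
        refine ⟨(b-r)/(a-r), ?_, by rw [mul_comm, div_mul_cancel₀ _ hcne]⟩
        rcases hrar with h | h
        · exact div_pos (by linarith) (by linarith)
        · exact div_pos_of_neg_of_neg (by linarith) (by linarith)
      have hfac : mobius (X - C r) 1 a b = C (a - r) * (X + C u) := by
        rw [mob_linear, mul_add, ← C_mul, hcu]
      have hmobQ : mobius Q m a b = (C (a - r) * (X + C u)) * mobius Q' (m-1) a b := by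
        have hstep : mobius Q m a b = mobius ((X - C r) * Q') (1 + (m-1)) a b := by
          rw [← hQ']; congr 1; omega
        rw [hstep,
          mob_mul a b _ _ 1 (m-1) (le_of_eq (natDegree_X_sub_C r)) (le_of_eq hdegQ'),
          hfac]
      have hgeq : E * mobius Q m a b =
          C (a - r) * ((X + C u) * (E * mobius Q' (m-1) a b)) := by
        rw [hmobQ]; ring
      constructor
      · rw [hgeq]
        exact SCP2_C_mul hcne (SCP2_linear hupos.le hS')
      · rw [hgeq]
        set g' := E * mobius Q' (m-1) a b with hg'
        have ht0 : (C (a - r) * ((X + C u) * g')).coeff 0 = (a-r) * (u * g'.coeff 0) := by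
          rw [coeff_C_mul, coeff_lin_zero]
        have htop : (C (a - r) * ((X + C u) * g')).coeff (m+1) =
            (a-r) * g'.coeff (m-1+1) := by
          rw [coeff_C_mul]
          have hd1 : (X + C u).natDegree ≤ 1 := by
            have h : (X + C u : Polynomial ℝ) = C 1 * X + C u := by simp
            rw [h]; exact natDegree_linear_le
          have hd2 : g'.natDegree ≤ (m-1) + 1 := natDegree_E_mob_le a b z Q' (m-1)
          rw [show m + 1 = 1 + ((m-1) + 1) by omega, coeff_mul_add_eq_of_natDegree_le hd1 hd2]
          have h : (X + C u).coeff 1 = 1 := by simp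
          rw [h, one_mul]
        rw [ht0, htop]
        have hrw : (a-r) * (u * g'.coeff 0) * ((a-r) * g'.coeff (m-1+1)) =
            ((a-r) * (a-r) * u) * (g'.coeff 0 * g'.coeff (m-1+1)) := by ring
        rw [hrw]
        exact mul_neg_of_pos_of_neg (mul_pos (mul_self_pos.mpr hcne) hupos) hc'
    · -- complex root case
      set s := w.re with hs
      set t := w.im with ht
      have hwne : (starRingEnd ℂ) w ≠ w := fun h => him (Complex.conj_eq_iff_im.mp h)
      have hconj0 : Polynomial.aeval ((starRingEnd ℂ) w) Q = 0 := by
        have h1 := Polynomial.aeval_algHom_apply Complex.conjAe w Q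
        rw [hwQ, map_zero] at h1
        rwa [Complex.conjAe_coe] at h1
      set S : Polynomial ℝ := X^2 - C (2*s) * X + C (s^2+t^2) with hSdef
      have hSmap : S.map (algebraMap ℝ ℂ) =
          (X - C w) * (X - C ((starRingEnd ℂ) w)) := by
        have h1 : w + (starRingEnd ℂ) w = (((2*s : ℝ)) : ℂ) := by
          rw [Complex.add_conj]
        have h2 : w * (starRingEnd ℂ) w = (((s^2+t^2 : ℝ)) : ℂ) := by
          rw [Complex.mul_conj, Complex.normSq_apply]
          push_cast; ring
        have hexp : (X - C w) * (X - C ((starRingEnd ℂ) w)) =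
            X^2 - C (w + (starRingEnd ℂ) w) * X + C (w * (starRingEnd ℂ) w) := by
          rw [C_add, C_mul]; ring
        rw [hexp, h1, h2, hSdef]
        simp only [Polynomial.map_add, Polynomial.map_sub, Polynomial.map_mul,
          Polynomial.map_pow, Polynomial.map_X, Polynomial.map_C]
        rw [← Complex.coe_algebraMap]
      have hSQdvd : S ∣ Q := by
        rw [← Polynomial.map_dvd_map' (algebraMap ℝ ℂ), hSmap]
        have d1 : (X - C w) ∣ Q.map (algebraMap ℝ ℂ) := dvd_iff_isRoot.mpr hw
        have d2 : (X - C ((starRingEnd ℂ) w)) ∣ Q.map (algebraMap ℝ ℂ) := by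
          refine dvd_iff_isRoot.mpr ?_
          rw [IsRoot.def, Polynomial.eval_map, ← Polynomial.aeval_def]
          exact hconj0
        have hne : (starRingEnd ℂ) w - w ≠ 0 := sub_ne_zero.mpr hwne
        have cop : IsCoprime (X - C w) (X - C ((starRingEnd ℂ) w)) := by
          refine ⟨C (((starRingEnd ℂ) w - w)⁻¹), -C (((starRingEnd ℂ) w - w)⁻¹), ?_⟩
          have hcc : C (((starRingEnd ℂ) w - w)⁻¹) * (X - C w) +
              -C (((starRingEnd ℂ) w - w)⁻¹) * (X - C ((starRingEnd ℂ) w)) =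
              C (((starRingEnd ℂ) w - w)⁻¹ * ((starRingEnd ℂ) w - w)) := by
            rw [C_mul, C_sub]; ring
          rw [hcc, inv_mul_cancel₀ hne, C_1]
        exact cop.mul_dvd d1 d2
      obtain ⟨Q', hQ'⟩ := hSQdvd
      have hSdeg : S.natDegree = 2 := by
        rw [show S = C 1 * X^2 + C (-(2*s)) * X + C (s^2+t^2) by
          rw [hSdef, C_1, C_neg]; ring]
        exact natDegree_quadratic one_ne_zero
      have hSmonic : S.Monic := by
        have hco : S.coeff 2 = 1 := by
          rw [hSdef, coeff_add, coeff_sub, coeff_X_pow, coeff_C_mul, coeff_X, coeff_C]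
          norm_num
        unfold Polynomial.Monic
        rw [Polynomial.leadingCoeff, hSdeg, hco]
      have hmon' : Q'.Monic := hSmonic.of_mul_monic_left (hQ' ▸ hmon)
      have hQ'0 : Q' ≠ 0 := hmon'.ne_zero
      have hS0 : S ≠ 0 := hSmonic.ne_zero
      have hdegQ' : Q'.natDegree = m - 2 ∧ 2 ≤ m := by
        have h := hdegQ
        rw [hQ', natDegree_mul hS0 hQ'0, hSdeg] at h
        omega
      have hroots' : ∀ w' : ℂ, Polynomial.aeval w' Q' = 0 →
          2*(b-a) < ‖(z:ℂ) - w'‖ := by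
        intro w' hw'
        apply hroots
        rw [hQ', map_mul, hw', mul_zero]
      obtain ⟨hS', hc'⟩ := IH (m-2) (by omega) Q' hmon' hdegQ'.1 hroots'
      -- sector facts
      have habs2 : (2*(b-a))^2 < (z - s)^2 + t^2 := by
        have h := hroots w hwQ
        have h0 : (0:ℝ) ≤ 2*(b-a) := by linarith
        have h1 : (2*(b-a))^2 < Complex.normSq ((z:ℂ) - w) := by
          rw [← Complex.sq_norm]
          nlinarith [mul_self_lt_mul_self h0 h]
        have h2 : ((z:ℂ) - w).re = z - s := by simp [Complex.sub_re, hs]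
        have h3 : ((z:ℂ) - w).im = -t := by simp [Complex.sub_im, ht]
        rw [Complex.normSq_apply, h2, h3] at h1
        nlinarith [h1]
      obtain ⟨hApos, h3A⟩ := sector hza hzb habs2
      have ht2 : 0 < t^2 := by
        rcases lt_or_gt_of_ne him with h | h <;> nlinarith
      have hq2 : 0 < (a-s)^2 + t^2 := by nlinarith [sq_nonneg (a-s)]
      have hq0 : 0 < (b-s)^2 + t^2 := by nlinarith [sq_nonneg (b-s)]
      have hq1 : 0 < 2*((s-a)*(s-b)+t^2) := by linarith
      set p := (2*((s-a)*(s-b)+t^2)) / ((a-s)^2 + t^2) with hpdef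
      set q := ((b-s)^2+t^2) / ((a-s)^2 + t^2) with hqdef
      have hppos : 0 < p := div_pos hq1 hq2
      have hqpos : 0 < q := div_pos hq0 hq2
      have hid : ((b-s)^2+t^2) * ((a-s)^2+t^2) =
          ((s-a)*(s-b)+t^2)^2 + (b-a)^2*t^2 := by ring
      have hpq : q ≤ p^2 := by
        rw [hpdef, hqdef, div_pow, div_le_div_iff₀ hq2 (by positivity)]
        nlinarith [mul_nonneg (sub_nonneg.mpr h3A) hq2.le]
      have hfacQ : mobius S 2 a b = C ((a-s)^2+t^2) * (X^2 + C p * X + C q) := by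
        have e1 : ((a-s)^2+t^2) * p = 2*((s-a)*(s-b)+t^2) := by
          rw [hpdef]; field_simp
        have e2 : ((a-s)^2+t^2) * q = (b-s)^2+t^2 := by
          rw [hqdef]; field_simp
        rw [hSdef, mob_quad]
        rw [show C ((a-s)^2+t^2) * (X^2 + C p * X + C q) =
            C ((a-s)^2+t^2) * X^2 + C (((a-s)^2+t^2) * p) * X + C (((a-s)^2+t^2) * q) by
          rw [C_mul, C_mul]; ring]
        rw [e1, e2]
      have hmobQ : mobius Q m a b =
          (C ((a-s)^2+t^2) * (X^2 + C p * X + C q)) * mobius Q' (m-2) a b := by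
        have hstep : mobius Q m a b = mobius (S * Q') (2 + (m-2)) a b := by
          rw [← hQ']; congr 1; omega
        rw [hstep,
          mob_mul a b _ _ 2 (m-2) (le_of_eq hSdeg) (le_of_eq hdegQ'.1), hfacQ]
      have hgeq : E * mobius Q m a b =
          C ((a-s)^2+t^2) * ((X^2 + C p * X + C q) * (E * mobius Q' (m-2) a b)) := by
        rw [hmobQ]; ring
      constructor
      · rw [hgeq]
        exact SCP2_C_mul hq2.ne' (SCP2_quad hppos.le hqpos.le hpq hS')
      · rw [hgeq]
        set g' := E * mobius Q' (m-2) a b with hg'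
        have ht0 : (C ((a-s)^2+t^2) * ((X^2 + C p * X + C q) * g')).coeff 0 =
            ((a-s)^2+t^2) * (q * g'.coeff 0) := by
          rw [coeff_C_mul, coeff_quad_zero]
        have htop : (C ((a-s)^2+t^2) * ((X^2 + C p * X + C q) * g')).coeff (m+1) =
            ((a-s)^2+t^2) * g'.coeff (m-2+1) := by
          rw [coeff_C_mul]
          have hd1 : (X^2 + C p * X + C q : Polynomial ℝ).natDegree ≤ 2 := by
            rw [show (X^2 + C p * X + C q : Polynomial ℝ) =
              C 1 * X^2 + C p * X + C q by simp]
            exact natDegree_quadratic_le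
          have hd2 : g'.natDegree ≤ (m-2) + 1 := natDegree_E_mob_le a b z Q' (m-2)
          rw [show m + 1 = 2 + ((m-2) + 1) by omega, coeff_mul_add_eq_of_natDegree_le hd1 hd2]
          have h : (X^2 + C p * X + C q : Polynomial ℝ).coeff 2 = 1 := by
            simp [coeff_X_pow, coeff_C]
          rw [h, one_mul]
        rw [ht0, htop]
        have hrw : ((a-s)^2+t^2) * (q * g'.coeff 0) *
            (((a-s)^2+t^2) * g'.coeff (m-2+1)) =
            (((a-s)^2+t^2) * ((a-s)^2+t^2) * q) * (g'.coeff 0 * g'.coeff (m-2+1)) := by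
          ring
        rw [hrw]
        exact mul_neg_of_pos_of_neg (mul_pos (mul_pos hq2 hq2) hqpos) hc'

end S14

/-- if the one-circle region of I = (a,b) contains a real root z of a
    square-free polynomial P with separation σ(z,P) > 2(b-a), then var(P,I) = 1. -/
theorem stmt14 (P : Polynomial ℝ) (n : ℕ) (hdeg : P.natDegree = n) (hsq : Squarefree P)
    (a b : ℝ) (hab : a < b) (z : ℝ) (hroot : P.eval z = 0)
    (hz : |z - (a+b)/2| < (b-a)/2)
    (hsep : ∀ w : ℂ, (Polynomial.aeval w) P = 0 → w ≠ (z : ℂ) →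
      2*(b-a) < ‖(z : ℂ) - w‖) :
    var P n a b = 1 := by
  classical
  open S14 in
  obtain ⟨hz1, hz2⟩ := abs_lt.mp hz
  have hza : a < z := by linarith
  have hzb : z < b := by linarith
  have hP0 : P ≠ 0 := by rintro rfl; exact not_squarefree_zero hsq
  have hn1 : 1 ≤ n := by
    by_contra h
    have hn0 : P.natDegree = 0 := by omega
    have hPC : P = C (P.coeff 0) := Polynomial.eq_C_of_natDegree_eq_zero hn0
    rw [hPC] at hroot
    simp at hroot
    rw [hPC, hroot] at hP0
    simp at hP0
  obtain ⟨Q0, hQ0⟩ := Polynomial.dvd_iff_isRoot.mpr (show P.IsRoot z from hroot)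
  have hQ0ne : Q0 ≠ 0 := by
    rintro rfl
    rw [mul_zero] at hQ0
    exact hP0 hQ0
  have hdegQ0 : Q0.natDegree = n - 1 := by
    have h := hdeg
    rw [hQ0, natDegree_mul (X_sub_C_ne_zero z) hQ0ne, natDegree_X_sub_C] at h
    omega
  set lc := Q0.leadingCoeff with hlc
  have hlcne : lc ≠ 0 := leadingCoeff_ne_zero.mpr hQ0ne
  set Q : Polynomial ℝ := Q0 * C lc⁻¹ with hQdef
  have hQmon : Q.Monic := monic_mul_leadingCoeff_inv hQ0ne
  have hQdeg : Q.natDegree = n - 1 := by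
    rw [hQdef, natDegree_mul hQ0ne (by simp [hlcne] : (C lc⁻¹ : Polynomial ℝ) ≠ 0),
      natDegree_C, add_zero, hdegQ0]
  have hQ0z : Q0.eval z ≠ 0 := by
    intro hzz
    obtain ⟨R, hR⟩ := Polynomial.dvd_iff_isRoot.mpr (show Q0.IsRoot z from hzz)
    have hdvd : (X - C z) * (X - C z) ∣ P := ⟨R, by rw [hQ0, hR]; ring⟩
    exact Polynomial.not_isUnit_X_sub_C z (hsq _ hdvd)
  have hrootsQ : ∀ w : ℂ, Polynomial.aeval w Q = 0 →
      2*(b-a) < ‖(z:ℂ) - w‖ := by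
    intro w hw
    have hw0 : Polynomial.aeval w Q0 = 0 := by
      rw [hQdef, map_mul, Polynomial.aeval_C] at hw
      rcases mul_eq_zero.mp hw with h | h
      · exact h
      · exfalso
        rw [Complex.coe_algebraMap] at h
        exact (inv_ne_zero hlcne) (by exact_mod_cast h)
    have hwP : Polynomial.aeval w P = 0 := by rw [hQ0, map_mul, hw0, mul_zero]
    have hwz : w ≠ (z:ℂ) := by
      rintro rfl
      have h2 : Polynomial.aeval ((z:ℂ)) Q0 = algebraMap ℝ ℂ (Q0.eval z) := by
        rw [← Complex.coe_algebraMap]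
        exact Polynomial.aeval_algebraMap_apply_eq_algebraMap_eval z Q0
      rw [hw0] at h2
      have h3 : ((Q0.eval z : ℝ):ℂ) = 0 := by
        rw [← Complex.coe_algebraMap]; exact h2.symm
      exact hQ0z (by exact_mod_cast h3)
    exact hsep w hwP hwz
  obtain ⟨hS2, hcs⟩ :=
    S14.key a b z hza hzb (n-1) Q hQmon hQdeg hrootsQ
  have hClcQ : C lc * Q = Q0 := by
    rw [hQdef]
    calc C lc * (Q0 * C lc⁻¹) = Q0 * (C lc * C lc⁻¹) := by ring
    _ = Q0 * C (lc * lc⁻¹) := by rw [C_mul]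
    _ = Q0 := by rw [mul_inv_cancel₀ hlcne, C_1, mul_one]
  have hmobP : mobius P n a b =
      C lc * ((C (a-z) * X + C (b-z)) * mobius Q (n-1) a b) := by
    have hstep : mobius P n a b = mobius ((X - C z) * Q0) (1 + (n-1)) a b := by
      rw [← hQ0]; congr 1; omega
    rw [hstep,
      S14.mob_mul a b _ _ 1 (n-1) (le_of_eq (natDegree_X_sub_C z)) (le_of_eq hdegQ0),
      S14.mob_linear, show Q0 = C lc * Q from hClcQ.symm, S14.mob_C_mul]
    ring
  set G := mobius P n a b with hG
  set g := (C (a-z) * X + C (b-z)) * mobius Q (n-1) a b with hg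
  have hS2' : S14.SCP2 G := by
    rw [hmobP]
    exact S14.SCP2_C_mul hlcne hS2
  have hends : G.coeff 0 * G.coeff n < 0 := by
    have hco : ∀ k, G.coeff k = lc * g.coeff k := by
      intro k
      rw [hmobP, coeff_C_mul]
    rw [hco 0, hco n, show n = (n-1)+1 by omega]
    have hrw : lc * g.coeff 0 * (lc * g.coeff ((n-1)+1)) =
        (lc * lc) * (g.coeff 0 * g.coeff ((n-1)+1)) := by ring
    rw [hrw]
    exact mul_neg_of_pos_of_neg (mul_self_pos.mpr hlcne) hcs
  unfold var
  rcases hS2' with hS | hS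
  · obtain ⟨t, h1, h2⟩ := hS
    have hf0 : 0 < G.coeff 0 := by
      rcases lt_or_eq_of_le (h1 0 (Nat.zero_le t)) with h | h
      · exact h
      · exfalso; rw [← h] at hends; nlinarith
    have hfn : G.coeff n < 0 := by nlinarith
    exact S14.signVar_eq_one ⟨t, h1, h2⟩ hf0 hfn
  · obtain ⟨t, h1, h2⟩ := hS
    have h1' : ∀ k ≤ t, 0 ≤ -(G.coeff k) := by
      intro k hk
      have := h1 k hk
      rwa [coeff_neg] at this
    have h2' : ∀ k, t < k → -(G.coeff k) ≤ 0 := by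
      intro k hk
      have := h2 k hk
      rwa [coeff_neg] at this
    have hf0 : 0 < -(G.coeff 0) := by
      rcases lt_or_eq_of_le (h1' 0 (Nat.zero_le t)) with h | h
      · exact h
      · exfalso
        have : G.coeff 0 = 0 := by linarith
        rw [this] at hends; nlinarith
    have hfn : -(G.coeff n) < 0 := by nlinarith
    have := S14.signVar_eq_one (f := fun k => -(G.coeff k)) ⟨t, h1', h2'⟩ hf0 hfn
    rwa [S14.signVar_neg (fun k => G.coeff k) n] at this
end

section
/- Lower bound at a well-separated evaluation point: Let P be a real polynomial of degree n with |P_n| ≥ 1/4, let m ∈ ℝ, ε > 0, and K ≥ 2⌈n/2⌉ real. Consider the multipoint m[ε] = {m + (i - ⌈n/2⌉)ε : i = 0,...,2⌈n/2⌉}. If the disk Δ of radius K·ε centered at m contains at least two roots of P, then there exists a point m₀ ∈ m[ε] with distance ≥ ε/2 to all roots of P, and for every such m₀ and every root z_i ∈ Δ, |P(m₀)| > 2^{-4n+1}·K^{-μ(Δ)-1}·σ(z_i,P)·|P'(z_i)|, where μ(Δ) is the number of roots of P in Δ. -/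
open Polynomial Finset

lemma my_derivative_finset_prod {R ι : Type*} [CommRing R] [DecidableEq ι]
    (s : Finset ι) (f : ι → R[X]) :
    Polynomial.derivative (∏ i ∈ s, f i) =
      ∑ i ∈ s, (∏ j ∈ s.erase i, f j) * Polynomial.derivative (f i) := by
  induction s using Finset.induction_on with
  | empty => simp
  | @insert a s ha ih =>
    rw [Finset.prod_insert ha, Polynomial.derivative_mul, Finset.sum_insert ha,
      Finset.erase_insert ha, ih, Finset.mul_sum, mul_comm (Polynomial.derivative (f a))]
    congr 1
    refine Finset.sum_congr rfl fun i hi => ?_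
    rw [Finset.erase_insert_of_ne (by rintro rfl; exact ha hi), Finset.prod_insert
      (fun h => ha (Finset.mem_of_mem_erase h)), mul_assoc]

lemma stmt15_eval_abs (p : Polynomial ℝ) {n : ℕ} (z : Fin n → ℂ)
    (hfact : p.map (algebraMap ℝ ℂ) =
      Polynomial.C ((p.leadingCoeff : ℝ) : ℂ) * ∏ i, (Polynomial.X - Polynomial.C (z i)))
    (x : ℝ) :
    |p.eval x| = |p.leadingCoeff| * ∏ j, ‖(x:ℂ) - z j‖ := by
  have h1 : ((p.eval x : ℝ) : ℂ) = ((p.leadingCoeff : ℝ) : ℂ) * ∏ j, ((x:ℂ) - z j) := by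
    have h2 := congrArg (Polynomial.eval ((x : ℝ) : ℂ)) hfact
    rw [Polynomial.eval_mul, Polynomial.eval_C, Polynomial.eval_prod] at h2
    simp only [Polynomial.eval_sub, Polynomial.eval_X, Polynomial.eval_C] at h2
    rw [← h2, show ((x:ℝ):ℂ) = algebraMap ℝ ℂ x from rfl, Polynomial.eval_map,
      Polynomial.eval₂_at_apply]
    rfl
  have h3 := congrArg norm h1
  rwa [Complex.norm_real, Real.norm_eq_abs, norm_mul, norm_prod, Complex.norm_real, Real.norm_eq_abs] at h3

lemma stmt15_deriv_abs (p : Polynomial ℝ) {n : ℕ} (z : Fin n → ℂ)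
    (hfact : p.map (algebraMap ℝ ℂ) =
      Polynomial.C ((p.leadingCoeff : ℝ) : ℂ) * ∏ i, (Polynomial.X - Polynomial.C (z i)))
    (i : Fin n) :
    ‖(Polynomial.aeval (z i)) (Polynomial.derivative p)‖ =
      |p.leadingCoeff| * ∏ j ∈ Finset.univ.erase i, ‖z i - z j‖ := by
  have h1 : (Polynomial.aeval (z i)) (Polynomial.derivative p) =
      ((p.leadingCoeff : ℝ) : ℂ) * ∏ j ∈ Finset.univ.erase i, (z i - z j) := by
    rw [Polynomial.aeval_def, Polynomial.eval₂_eq_eval_map, ← Polynomial.derivative_map, hfact]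
    rw [Polynomial.derivative_mul, Polynomial.derivative_C, zero_mul, zero_add,
      my_derivative_finset_prod]
    simp only [Polynomial.derivative_sub, Polynomial.derivative_X, Polynomial.derivative_C,
      sub_zero, mul_one]
    rw [Polynomial.eval_mul, Polynomial.eval_C, Polynomial.eval_finset_sum]
    congr 1
    rw [Finset.sum_eq_single i]
    · rw [Polynomial.eval_prod]
      simp
    · intro k _ hk
      rw [Polynomial.eval_prod]
      refine Finset.prod_eq_zero (Finset.mem_erase.mpr ⟨(Ne.symm hk), Finset.mem_univ i⟩) ?_
      simp
    · simp
  rw [h1, norm_mul, norm_prod, Complex.norm_real, Real.norm_eq_abs]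

/-- Lemma on admissible points of a multipoint: if the disk of radius K·ε
    around m contains at least two roots of P, then some point of the multipoint m[ε]
    has distance ≥ ε/2 to all roots, and at every such point m₀ the value |P(m₀)| is
    bounded below by 2^{-4n+1}·K^{-μ(Δ)-1}·σ(z_i,P)·|P'(z_i)| for every root z_i ∈ Δ. -/
theorem stmt15 (n : ℕ) (hn : 2 ≤ n) (p : Polynomial ℝ) (hdeg : p.natDegree = n)
    (hlc : 1/4 ≤ |p.leadingCoeff|)
    (z : Fin n → ℂ)
    (hfact : p.map (algebraMap ℝ ℂ) =
      Polynomial.C ((p.leadingCoeff : ℝ) : ℂ) * ∏ i, (Polynomial.X - Polynomial.C (z i)))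
    (m ε K : ℝ) (hε : 0 < ε) (hK : ((2 * ((n+1)/2) : ℕ) : ℝ) ≤ K)
    (htwo : ∃ i j : Fin n, i ≠ j ∧
      ‖z i - (m : ℂ)‖ < K * ε ∧ ‖z j - (m : ℂ)‖ < K * ε)
    (μ : ℕ)
    (hμ : μ = (Finset.univ.filter (fun j : Fin n =>
      ‖z j - (m : ℂ)‖ < K * ε)).card)
    (pts : ℕ → ℝ)
    (hpts : ∀ i : ℕ, pts i = m + ((i : ℝ) - (((n+1)/2 : ℕ) : ℝ)) * ε) :
    (∃ i₀ ≤ 2 * ((n+1)/2),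
        ∀ j : Fin n, ε/2 ≤ ‖((pts i₀ : ℝ) : ℂ) - z j‖) ∧
    (∀ i₀ ≤ 2 * ((n+1)/2),
      (∀ j : Fin n, ε/2 ≤ ‖((pts i₀ : ℝ) : ℂ) - z j‖) →
      ∀ i : Fin n, ‖z i - (m : ℂ)‖ < K * ε →
      ∀ σi : ℝ,
        ((∃ j : Fin n, j ≠ i ∧ ‖z i - z j‖ = σi) ∧
          ∀ j : Fin n, j ≠ i → σi ≤ ‖z i - z j‖) →
        (2:ℝ) ^ (-4*(n:ℝ)+1) * K ^ (-(μ:ℝ)-1) * σi *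
            ‖(Polynomial.aeval (z i)) (Polynomial.derivative p)‖ <
          |p.eval (pts i₀)|) := by
  have hn1 : 1 ≤ (n+1)/2 := by omega
  have hK2 : (2:ℝ) ≤ K := by
    refine le_trans ?_ hK
    exact_mod_cast (by omega : (2:ℕ) ≤ 2 * ((n+1)/2))
  have hKpos : (0:ℝ) < K := by linarith
  have hcpos : (0:ℝ) < |p.leadingCoeff| := lt_of_lt_of_le (by norm_num) hlc
  have habs : ∀ (x : ℝ) (j : Fin n), |x - (z j).re| ≤ ‖(x:ℂ) - z j‖ := by
    intro x j
    have h := Complex.abs_re_le_norm ((x:ℂ) - z j)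
    simpa using h
  have tri : ∀ u v : ℂ, ‖u - v‖ ≤
      ‖u - (m:ℂ)‖ + ‖v - (m:ℂ)‖ := by
    intro u v
    calc ‖u - v‖ ≤ ‖u - (m:ℂ)‖ + ‖(m:ℂ) - v‖ :=
          norm_sub_le_norm_sub_add_norm_sub u (m:ℂ) v
    _ = ‖u - (m:ℂ)‖ + ‖v - (m:ℂ)‖ := by
          rw [norm_sub_rev (m:ℂ) v]
  constructor
  · -- pigeonhole
    by_contra hcon
    push_neg at hcon
    choose g hg using hcon
    have hGinj : Function.Injective
        (fun i : Fin (2 * ((n+1)/2)+1) => g i.val (Nat.lt_succ_iff.mp i.isLt)) := by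
      intro a b hab
      by_contra hne
      simp only at hab
      have h1 := hg a.val (Nat.lt_succ_iff.mp a.isLt)
      have h2 := hg b.val (Nat.lt_succ_iff.mp b.isLt)
      rw [hab] at h1
      set j := g b.val (Nat.lt_succ_iff.mp b.isLt) with hj
      have ha' := lt_of_le_of_lt (habs (pts a.val) j) h1
      have hb' := lt_of_le_of_lt (habs (pts b.val) j) h2
      have hdiff : ((a.val:ℝ) - b.val) * ε =
          (pts a.val - (z j).re) - (pts b.val - (z j).re) := by
        rw [hpts a.val, hpts b.val]; ring
      have hlt : |((a.val:ℝ) - b.val) * ε| < ε := by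
        rw [hdiff]
        calc |(pts a.val - (z j).re) - (pts b.val - (z j).re)|
            ≤ |pts a.val - (z j).re| + |pts b.val - (z j).re| := abs_sub _ _
        _ < ε/2 + ε/2 := by exact add_lt_add ha' hb'
        _ = ε := by ring
      have hvne : a.val ≠ b.val := fun h => hne (Fin.ext h)
      have hz : ((a.val:ℤ) - b.val) ≠ 0 := by
        intro h; apply hvne; omega
      have h1le : (1:ℝ) ≤ |(a.val:ℝ) - b.val| := by
        have := Int.one_le_abs hz
        have h2 : ((1:ℤ):ℝ) ≤ (|(a.val:ℤ) - b.val| : ℝ) := by exact_mod_cast this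
        push_cast at h2
        exact h2
      rw [abs_mul, abs_of_pos hε] at hlt
      nlinarith
    have hcard := Fintype.card_le_of_injective _ hGinj
    simp only [Fintype.card_fin] at hcard
    omega
  · -- main bound
    intro i₀ hi₀ hfar i hiΔ σi hσ
    obtain ⟨⟨j', hj'i, hj'σ⟩, hσmin⟩ := hσ
    have hσ0 : 0 ≤ σi := hj'σ ▸ norm_nonneg _
    classical
    set Δf := Finset.univ.filter (fun j : Fin n =>
      ‖z j - (m : ℂ)‖ < K * ε) with hΔf
    have hiΔf : i ∈ Δf := Finset.mem_filter.mpr ⟨Finset.mem_univ i, hiΔ⟩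
    have hμ1 : 1 ≤ μ := by
      rw [hμ]; exact Finset.card_pos.mpr ⟨i, hiΔf⟩
    have hσlt : σi < 2*K*ε := by
      obtain ⟨a, b, hab, haΔ, hbΔ⟩ := htwo
      rcases eq_or_ne a i with rfl | hai
      · have h1 := hσmin b (Ne.symm hab)
        have h2 := tri (z a) (z b)
        linarith
      · have h1 := hσmin a hai
        have h2 := tri (z i) (z a)
        linarith
    have hm₀m : |pts i₀ - m| ≤ K/2 * ε := by
      rw [hpts]
      have hx : m + ((i₀:ℝ) - (((n+1)/2:ℕ):ℝ)) * ε - m = ((i₀:ℝ) - (((n+1)/2:ℕ):ℝ)) * ε := by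
        ring
      rw [hx, abs_mul, abs_of_pos hε]
      have h1 : |(i₀:ℝ) - (((n+1)/2:ℕ):ℝ)| ≤ (((n+1)/2:ℕ):ℝ) := by
        rw [abs_le]
        constructor
        · have : (0:ℝ) ≤ (i₀:ℝ) := Nat.cast_nonneg _
          linarith
        · have h2 : (i₀:ℝ) ≤ ((2*((n+1)/2):ℕ):ℝ) := by exact_mod_cast hi₀
          push_cast at h2 ⊢
          linarith
      have h3 : (((n+1)/2:ℕ):ℝ) ≤ K/2 := by
        push_cast at hK
        linarith
      have := mul_le_mul_of_nonneg_right (le_trans h1 h3) (le_of_lt hε)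
      linarith
    have hterm : ∀ j ∈ Finset.univ.erase i, ‖z i - z j‖ ≤
        (if j ∈ Δf then 4*K else 4) * ‖((pts i₀:ℝ):ℂ) - z j‖ := by
      intro j _
      have hfj : ε/2 ≤ ‖((pts i₀:ℝ):ℂ) - z j‖ := hfar j
      by_cases hjΔ : j ∈ Δf
      · rw [if_pos hjΔ]
        have hjlt : ‖z j - (m:ℂ)‖ < K*ε := (Finset.mem_filter.mp hjΔ).2
        have h2 := tri (z i) (z j)
        have h4 : (0:ℝ) ≤ 4*K := by linarith
        nlinarith
      · rw [if_neg hjΔ]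
        have hjge : K*ε ≤ ‖z j - (m:ℂ)‖ := by
          have : ¬ (‖z j - (m:ℂ)‖ < K * ε) := by
            intro h; exact hjΔ (Finset.mem_filter.mpr ⟨Finset.mem_univ j, h⟩)
          linarith [not_lt.mp this]
        have t := norm_sub_le_norm_sub_add_norm_sub (z j) (((pts i₀:ℝ)):ℂ) (m:ℂ)
        have hmm : ‖((pts i₀:ℝ):ℂ) - (m:ℂ)‖ = |pts i₀ - m| := by
          rw [← Complex.ofReal_sub, Complex.norm_real, Real.norm_eq_abs]
        have habs2 : ‖z j - ((pts i₀:ℝ):ℂ)‖ =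
            ‖((pts i₀:ℝ):ℂ) - z j‖ := norm_sub_rev _ _
        rw [habs2, hmm] at t
        -- t : abs (z j - m) ≤ abs (m₀ - z j) + |pts i₀ - m|
        have h2 := tri (z i) (z j)
        -- abs(z i - z j) ≤ abs(z i - m) + abs(z j - m) ≤ Kε + abs(z j - m) ≤ 2 abs(z j - m)
        -- abs(m₀ - z j) ≥ abs(z j - m) - K/2 ε ≥ abs(z j - m)/2
        nlinarith
    have hprod := Finset.prod_le_prod
      (f := fun j => ‖z i - z j‖)
      (g := fun j => (if j ∈ Δf then 4*K else 4) * ‖((pts i₀:ℝ):ℂ) - z j‖)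
      (fun j _ => norm_nonneg _) hterm
    rw [Finset.prod_mul_distrib] at hprod
    have hBprod : ∏ j ∈ Finset.univ.erase i, (if j ∈ Δf then 4*K else (4:ℝ)) =
        4^(n-1) * K^(μ-1) := by
      have hsplit : ∀ j : Fin n, (if j ∈ Δf then 4*K else (4:ℝ)) =
          4 * (if j ∈ Δf then K else 1) := by
        intro j; split_ifs <;> ring
      simp_rw [hsplit]
      rw [Finset.prod_mul_distrib, Finset.prod_const,
        Finset.card_erase_of_mem (Finset.mem_univ i), Finset.card_univ, Fintype.card_fin]
      congr 1
      rw [Finset.prod_ite_mem, Finset.prod_const]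
      congr 1
      rw [Finset.erase_inter, Finset.univ_inter, Finset.card_erase_of_mem hiΔf, hμ]
    rw [hBprod] at hprod
    set A := ∏ j ∈ Finset.univ.erase i, ‖((pts i₀:ℝ):ℂ) - z j‖ with hA
    have hApos : 0 < A :=
      Finset.prod_pos (fun j _ => lt_of_lt_of_le (by positivity) (hfar j))
    set P := ∏ j ∈ Finset.univ.erase i, ‖z i - z j‖ with hP
    set c := |p.leadingCoeff| with hc
    rw [stmt15_deriv_abs p z hfact i, stmt15_eval_abs p z hfact (pts i₀)]
    have hsplit2 : ∏ j, ‖((pts i₀:ℝ):ℂ) - z j‖ =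
        ‖((pts i₀:ℝ):ℂ) - z i‖ * A :=
      (Finset.mul_prod_erase Finset.univ _ (Finset.mem_univ i)).symm
    rw [hsplit2]
    set D2 := (2:ℝ) ^ (-4*(n:ℝ)+1) with hD2
    set DK := K ^ (-(μ:ℝ)-1) with hDK
    have hD2pos : 0 < D2 := Real.rpow_pos_of_pos two_pos _
    have hDKpos : 0 < DK := Real.rpow_pos_of_pos hKpos _
    have e1 : D2 * (4:ℝ)^(n-1) = (2:ℝ)^(-2*(n:ℝ)-1) := by
      have h41 : (4:ℝ)^(n-1) = (2:ℝ)^(((2*(n-1):ℕ)):ℝ) := by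
        rw [Real.rpow_natCast, pow_mul]; norm_num
      rw [hD2, h41, ← Real.rpow_add two_pos]
      congr 1
      rw [Nat.cast_mul, Nat.cast_sub (by omega : 1 ≤ n)]
      push_cast; ring
    have e2 : DK * K^(μ-1) = K^(-2:ℝ) := by
      have h42 : K^(μ-1) = K^(((μ-1:ℕ)):ℝ) := (Real.rpow_natCast K (μ-1)).symm
      rw [hDK, h42, ← Real.rpow_add hKpos]
      congr 1
      rw [Nat.cast_sub hμ1]
      push_cast; ring
    have e3 : (D2*(4:ℝ)^(n-1)) * (DK*K^(μ-1)) * (2*K*ε) ≤ ε/2 := by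
      rw [e1, e2]
      have h5 : (2:ℝ)^(-2*(n:ℝ)-1) * 2 = (2:ℝ)^(-2*(n:ℝ)) := by
        conv_rhs => rw [show (-2*(n:ℝ)) = (-2*(n:ℝ)-1) + 1 by ring,
          Real.rpow_add two_pos, Real.rpow_one]
      have h6 : K^(-2:ℝ) * K = K^(-1:ℝ) := by
        conv_rhs => rw [show (-1:ℝ) = (-2:ℝ) + 1 by norm_num,
          Real.rpow_add hKpos, Real.rpow_one]
      have h7 : (2:ℝ)^(-2*(n:ℝ)) ≤ 1/2 := by
        have h8 : (2:ℝ)^(-2*(n:ℝ)) ≤ (2:ℝ)^(-1:ℝ) := by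
          apply Real.rpow_le_rpow_of_exponent_le one_le_two
          have : (1:ℝ) ≤ (n:ℝ) := by exact_mod_cast (by omega : 1 ≤ n)
          linarith
        rw [Real.rpow_neg_one] at h8
        linarith [h8]
      have h9 : K^(-1:ℝ) ≤ 1/2 := by
        rw [Real.rpow_neg_one]
        have := inv_anti₀ two_pos hK2
        norm_num at this ⊢
        linarith
      have h10 : (0:ℝ) ≤ (2:ℝ)^(-2*(n:ℝ)) := le_of_lt (Real.rpow_pos_of_pos two_pos _)
      have h11 : (0:ℝ) ≤ K^(-1:ℝ) := le_of_lt (Real.rpow_pos_of_pos hKpos _)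
      calc (2:ℝ)^(-2*(n:ℝ)-1) * K^(-2:ℝ) * (2*K*ε)
          = ((2:ℝ)^(-2*(n:ℝ)-1) * 2) * (K^(-2:ℝ) * K) * ε := by ring
      _ = (2:ℝ)^(-2*(n:ℝ)) * K^(-1:ℝ) * ε := by rw [h5, h6]
      _ ≤ (1/2) * (1/2) * ε := by
          apply mul_le_mul_of_nonneg_right _ (le_of_lt hε)
          exact mul_le_mul h7 h9 h11 (by norm_num)
      _ ≤ ε/2 := by linarith
    have hQpos : 0 < c * ((4:ℝ)^(n-1) * K^(μ-1) * A) :=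
      mul_pos hcpos (mul_pos (mul_pos (pow_pos (by norm_num) _) (pow_pos hKpos _)) hApos)
    calc D2 * DK * σi * (c * P)
        ≤ D2 * DK * σi * (c * ((4:ℝ)^(n-1) * K^(μ-1) * A)) := by
          apply mul_le_mul_of_nonneg_left _ (by positivity)
          exact mul_le_mul_of_nonneg_left hprod (le_of_lt hcpos)
    _ = (D2 * DK * (c * ((4:ℝ)^(n-1) * K^(μ-1) * A))) * σi := by ring
    _ < (D2 * DK * (c * ((4:ℝ)^(n-1) * K^(μ-1) * A))) * (2*K*ε) := by
          apply mul_lt_mul_of_pos_left hσlt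
          exact mul_pos (mul_pos hD2pos hDKpos) hQpos
    _ = ((D2*(4:ℝ)^(n-1)) * (DK*K^(μ-1)) * (2*K*ε)) * (c * A) := by ring
    _ ≤ (ε/2) * (c * A) := by
          apply mul_le_mul_of_nonneg_right e3
          exact le_of_lt (mul_pos hcpos hApos)
    _ ≤ ‖((pts i₀:ℝ):ℂ) - z i‖ * (c * A) := by
          apply mul_le_mul_of_nonneg_right (hfar i)
          exact le_of_lt (mul_pos hcpos hApos)
    _ = c * (‖((pts i₀:ℝ):ℂ) - z i‖ * A) := by ring
end

section
/- Abstract quadratic-interval-refinement sequence bound: Let w > w' > 0 be reals and m ≥ 1 an integer. Define a sequence (x_i, n_i) with (x_1,n_1) = (w,m) and, writing N_i = 2^{2^{n_i}}: if x_i/N_i ≥ w', then x_{i+1} = ε_i·x_i for some ε_i ∈ [0, 1/N_i] and n_{i+1} = n_i + 1; otherwise x_{i+1} = δ_i·x_i for some δ_i ∈ [0, 3/4] and n_{i+1} = max(1, n_i - 1). Then the smallest index i₀ with x_{i₀} ≤ w' satisfies i₀ ≤ 8·(n_1 + log₂ log₂ max(4, w/w')). -/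
open Real

noncomputable def phiF (n : ℕ) (y : ℝ) : ℝ :=
  3 * max (Real.logb 2 y) 0 + n + 3 * max (max (Real.logb 2 y) 0 - n - 1) 0 + 5/2 * min y 2

lemma phiF_ge (n : ℕ) (hn : 1 ≤ n) (y : ℝ) (hy : 0 < y) : 1 ≤ phiF n y := by
  have h1 : (0:ℝ) ≤ max (Real.logb 2 y) 0 := le_max_right _ _
  have h2 : (0:ℝ) ≤ max (max (Real.logb 2 y) 0 - n - 1) 0 := le_max_right _ _
  have h3 : (0:ℝ) ≤ min y 2 := le_min hy.le (by norm_num)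
  have h4 : (1:ℝ) ≤ (n:ℝ) := by exact_mod_cast hn
  unfold phiF; linarith

lemma keyK (t u : ℝ) (ht : 0 < t) (htu : t < u) :
    Real.logb 2 (u - t) + Real.logb 2 t + 5/3 ≤ 2 * Real.logb 2 u := by
  have hut : 0 < u - t := sub_pos.2 htu
  have hu : 0 < u := ht.trans htu
  have h1 : 16/5 * ((u - t) * t) ≤ u^2 := by nlinarith [sq_nonneg (u - 8/5*t), sq_nonneg t]
  have h2 : (0:ℝ) ≤ (u - t) * t := by positivity
  have h3 : (16/5 * ((u - t) * t))^3 ≤ (u^2)^3 := by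
    apply pow_le_pow_left₀ (by positivity) h1
  have key : 32 * ((u - t) * t)^3 ≤ (u^2)^3 := by nlinarith [pow_nonneg h2 3]
  have hlog : Real.logb 2 (32 * ((u - t) * t)^3) ≤ Real.logb 2 ((u^2)^3) := by
    apply Real.logb_le_logb_of_le one_lt_two (by positivity) key
  rw [Real.logb_mul (by norm_num) (by positivity), show (32:ℝ) = 2^(5:ℕ) by norm_num,
    Real.logb_pow, Real.logb_pow, Real.logb_pow, Real.logb_pow, Real.logb_mul (ne_of_gt hut) (ne_of_gt ht),
    Real.logb_self_eq_one one_lt_two] at hlog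
  push_cast at hlog
  linarith

lemma stepA (n : ℕ) (hn : 1 ≤ n) (y y' : ℝ) (hty : (2:ℝ)^n ≤ y) (hy' : 0 < y')
    (hy'le : y' ≤ y - 2^n) : phiF (n+1) y' ≤ phiF n y - 1 := by
  have ht2 : (2:ℝ) ≤ (2:ℝ)^n := by
    calc (2:ℝ) = 2^1 := (pow_one 2).symm
    _ ≤ 2^n := pow_le_pow_right₀ one_le_two hn
  have htpos : (0:ℝ) < 2^n := by positivity
  have hypos : 0 < y := lt_of_lt_of_le htpos hty
  have hlogt : Real.logb 2 ((2:ℝ)^n) = n := by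
    rw [Real.logb_pow, Real.logb_self_eq_one one_lt_two]; ring
  have hRn : (n:ℝ) ≤ Real.logb 2 y := by
    rw [← hlogt]; exact Real.logb_le_logb_of_le one_lt_two htpos hty
  have hn1 : (1:ℝ) ≤ (n:ℝ) := by exact_mod_cast hn
  have hR0 : max (Real.logb 2 y) 0 = Real.logb 2 y := max_eq_left (by linarith)
  have hminy : min y 2 = 2 := min_eq_right (by linarith)
  have hvpos : 0 < y - 2^n := lt_of_lt_of_le hy' hy'le
  have hK := keyK ((2:ℝ)^n) y htpos (by linarith)
  rw [hlogt] at hK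
  have hL' : Real.logb 2 y' ≤ Real.logb 2 (y - 2^n) :=
    Real.logb_le_logb_of_le one_lt_two hy' hy'le
  have hLR : Real.logb 2 (y - 2^n) ≤ Real.logb 2 y :=
    Real.logb_le_logb_of_le one_lt_two hvpos (by linarith)
  have hminy' : min y' 2 ≤ 2 := min_le_right _ _
  have hmax2 : (R : ℝ) → R - (n:ℝ) - 1 ≤ max (R - n - 1) 0 := fun R => le_max_left _ _
  unfold phiF
  push_cast
  rw [hR0, hminy]
  rcases le_or_gt (Real.logb 2 y') 0 with h | h
  · rw [max_eq_right h, max_eq_right (show (0:ℝ) - ((n:ℝ)+1) - 1 ≤ 0 by linarith)]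
    have := le_max_right (Real.logb 2 y - (n:ℝ) - 1) (0:ℝ)
    linarith
  · rw [max_eq_left h.le]
    rcases le_or_gt (Real.logb 2 y' - ((n:ℝ)+1) - 1) 0 with h2 | h2
    · rw [max_eq_right h2]
      have := le_max_left (Real.logb 2 y - (n:ℝ) - 1) 0
      linarith
    · have hRbig : (n:ℝ) + 2 < Real.logb 2 y := by linarith
      rw [max_eq_left h2.le, max_eq_left (by linarith : (0:ℝ) ≤ Real.logb 2 y - (n:ℝ) - 1)]
      linarith

lemma logb3_le : Real.logb 2 3 ≤ 8/5 := by
  have h : (3:ℝ)^(5:ℕ) ≤ 2^(8:ℕ) := by norm_num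
  have := Real.logb_le_logb_of_le one_lt_two (by positivity : (0:ℝ) < 3^(5:ℕ)) h
  rw [Real.logb_pow, Real.logb_pow, Real.logb_self_eq_one one_lt_two] at this
  push_cast at this
  linarith

lemma stepB (n : ℕ) (hn : 1 ≤ n) (y y' : ℝ) (hy : 0 < y) (hylt : y ≤ 2^n) (hy' : 0 < y')
    (hy'le : y' ≤ y + (Real.logb 2 3 - 2)) : phiF (max 1 (n-1)) y' ≤ phiF n y - 1 := by
  have hc : Real.logb 2 3 - 2 ≤ -(2/5) := by linarith [logb3_le]
  have hlogt : Real.logb 2 ((2:ℝ)^n) = n := by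
    rw [Real.logb_pow, Real.logb_self_eq_one one_lt_two]; ring
  have hRle : Real.logb 2 y ≤ (n:ℝ) := by
    rw [← hlogt]; exact Real.logb_le_logb_of_le one_lt_two hy hylt
  have hR' : Real.logb 2 y' ≤ Real.logb 2 y :=
    Real.logb_le_logb_of_le one_lt_two hy' (by linarith)
  have hn0 : (0:ℝ) ≤ (n:ℝ) := Nat.cast_nonneg n
  have hmaxy : max (Real.logb 2 y') 0 ≤ max (Real.logb 2 y) 0 :=
    max_le_max_right 0 hR'
  have hmaxn : max (Real.logb 2 y) 0 ≤ (n:ℝ) := max_le hRle hn0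
  rcases Nat.lt_or_ge n 2 with h2 | h2
  · -- n = 1
    have hne : n = 1 := by omega
    subst hne
    have hy2 : y ≤ 2 := by simpa using hylt
    have hy'2 : y' ≤ 2 := by linarith
    have hR1 : max (Real.logb 2 y) 0 ≤ 1 := by
      apply max_le _ zero_le_one
      calc Real.logb 2 y ≤ Real.logb 2 2 := Real.logb_le_logb_of_le one_lt_two hy (by linarith)
      _ = 1 := Real.logb_self_eq_one one_lt_two
    unfold phiF
    norm_num
    rw [min_eq_left hy2, min_eq_left hy'2,
      max_eq_right (by linarith : max (Real.logb 2 y) 0 - 1 - 1 ≤ 0),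
      max_eq_right (by linarith : max (Real.logb 2 y') 0 - 1 - 1 ≤ 0)]
    linarith
  · -- n ≥ 2
    have hmx : max 1 (n-1) = n - 1 := by omega
    rw [hmx]
    have hcast : ((n - 1 : ℕ) : ℝ) = (n:ℝ) - 1 := by
      have : 1 ≤ n := hn
      push_cast [Nat.cast_sub this]
      ring
    unfold phiF
    rw [hcast]
    have hp1 : max (Real.logb 2 y') 0 - ((n:ℝ) - 1) - 1 ≤ 0 := by linarith
    rw [max_eq_right hp1]
    have hp2 : (0:ℝ) ≤ max (max (Real.logb 2 y) 0 - (n:ℝ) - 1) 0 := le_max_right _ _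
    have hminle : min y' 2 ≤ min y 2 := min_le_min_right 2 (by linarith)
    linarith


/-- abstract quadratic-interval-refinement sequence bound. The smallest
    index i₀ ≥ 1 with x_{i₀} ≤ w' satisfies i₀ ≤ 8·(n₁ + log₂ log₂ max(4, w/w')). -/
theorem stmt18 (w w' : ℝ) (hw' : 0 < w') (hww : w' < w)
    (m : ℕ) (hm : 1 ≤ m) (x : ℕ → ℝ) (nseq : ℕ → ℕ)
    (hpos : ∀ i, 1 ≤ i → 1 ≤ nseq i)
    (hx1 : x 1 = w) (hn1 : nseq 1 = m)
    (hstep : ∀ i, 1 ≤ i →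
      (w' ≤ x i / 2^(2^(nseq i)) →
        (∃ ε : ℝ, 0 ≤ ε ∧ ε ≤ 1/(2:ℝ)^(2^(nseq i)) ∧ x (i+1) = ε * x i) ∧
          nseq (i+1) = nseq i + 1) ∧
      (x i / 2^(2^(nseq i)) < w' →
        (∃ δ : ℝ, 0 ≤ δ ∧ δ ≤ 3/4 ∧ x (i+1) = δ * x i) ∧
          nseq (i+1) = max 1 (nseq i - 1)))
    (i₀ : ℕ) (hi₀ : 1 ≤ i₀) (hle : x i₀ ≤ w')
    (hmin : ∀ j, 1 ≤ j → j < i₀ → w' < x j) :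
    (i₀ : ℝ) ≤ 8 * ((m : ℝ) + Real.logb 2 (Real.logb 2 (max 4 (w / w')))) := by
  have hw : 0 < w := hw'.trans hww
  set L := Real.logb 2 (Real.logb 2 (max 4 (w / w'))) with hLdef
  have hinner : (2:ℝ) ≤ Real.logb 2 (max 4 (w / w')) := by
    have h4 : (4:ℝ) ≤ max 4 (w/w') := le_max_left _ _
    have h := Real.logb_le_logb_of_le one_lt_two
      (show (0:ℝ) < 2^(2:ℕ) by positivity)
      (show (2:ℝ)^(2:ℕ) ≤ max 4 (w/w') by norm_num)
    rw [Real.logb_pow, Real.logb_self_eq_one one_lt_two] at h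
    push_cast at h
    linarith
  have hL1 : 1 ≤ L := by
    rw [hLdef]
    calc (1:ℝ) = Real.logb 2 2 := (Real.logb_self_eq_one one_lt_two).symm
    _ ≤ _ := Real.logb_le_logb_of_le one_lt_two two_pos hinner
  have hm1 : (1:ℝ) ≤ (m:ℝ) := by exact_mod_cast hm
  rcases Nat.lt_or_ge i₀ 2 with h2 | h2
  · have hone : i₀ = 1 := by omega
    rw [hone]
    push_cast
    linarith
  have hypos : ∀ j, 1 ≤ j → j < i₀ → 0 < Real.logb 2 (x j / w') := by
    intro j hj hj2
    exact Real.logb_pos one_lt_two ((one_lt_div hw').2 (hmin j hj hj2))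
  have step : ∀ i, 1 ≤ i → i + 1 < i₀ →
      phiF (nseq (i+1)) (Real.logb 2 (x (i+1) / w')) ≤
        phiF (nseq i) (Real.logb 2 (x i / w')) - 1 := by
    intro i hi hi1
    have hxi : w' < x i := hmin i hi (by omega)
    have hxi1 : w' < x (i+1) := hmin (i+1) (by omega) hi1
    have hxipos : 0 < x i := hw'.trans hxi
    have hxi1pos : 0 < x (i+1) := hw'.trans hxi1
    have hni := hpos i hi
    have hNpos : (0:ℝ) < 2^(2^(nseq i)) := by positivity
    have hlogN : Real.logb 2 ((2:ℝ)^(2^(nseq i))) = (2:ℝ)^(nseq i) := by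
      rw [Real.logb_pow, Real.logb_self_eq_one one_lt_two]
      push_cast
      ring
    have hy'pos : 0 < Real.logb 2 (x (i+1) / w') := hypos (i+1) (by omega) hi1
    rcases le_or_gt w' (x i / 2^(2^(nseq i))) with hc | hc
    · obtain ⟨⟨ε, hε0, hεle, hxe⟩, hns⟩ := (hstep i hi).1 hc
      have hdivge : (2:ℝ)^(2^(nseq i)) ≤ x i / w' := by
        rw [le_div_iff₀ hw']
        rw [le_div_iff₀ hNpos] at hc
        linarith
      have hy1 : ((2:ℝ)^(nseq i)) ≤ Real.logb 2 (x i / w') := by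
        rw [← hlogN]
        exact Real.logb_le_logb_of_le one_lt_two hNpos hdivge
      have hxle : x (i+1) ≤ x i / 2^(2^(nseq i)) := by
        rw [hxe]
        calc ε * x i ≤ 1/2^(2^(nseq i)) * x i := mul_le_mul_of_nonneg_right hεle hxipos.le
        _ = x i / 2^(2^(nseq i)) := by ring
      have hy2 : Real.logb 2 (x (i+1) / w') ≤ Real.logb 2 (x i / w') - 2^(nseq i) := by
        have h1 : Real.logb 2 (x (i+1)/w') ≤ Real.logb 2 ((x i / w')/2^(2^(nseq i))) := by
          apply Real.logb_le_logb_of_le one_lt_two (div_pos hxi1pos hw')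
          calc x (i+1) / w' ≤ (x i / 2^(2^(nseq i))) / w' := by gcongr
          _ = (x i / w') / 2^(2^(nseq i)) := by ring
        rwa [Real.logb_div (ne_of_gt (div_pos hxipos hw')) (ne_of_gt hNpos), hlogN] at h1
      rw [hns]
      exact stepA (nseq i) hni _ _ hy1 hy'pos (by linarith)
    · obtain ⟨⟨δ, hδ0, hδle, hxd⟩, hns⟩ := (hstep i hi).2 hc
      have hylt : Real.logb 2 (x i / w') ≤ (2:ℝ)^(nseq i) := by
        rw [← hlogN]
        apply Real.logb_le_logb_of_le one_lt_two (div_pos hxipos hw')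
        rw [div_le_iff₀ hw']
        rw [div_lt_iff₀ hNpos] at hc
        nlinarith
      have hxle : x (i+1) ≤ 3/4 * x i := by
        rw [hxd]
        exact mul_le_mul_of_nonneg_right hδle hxipos.le
      have hy2 : Real.logb 2 (x (i+1)/w') ≤ Real.logb 2 (x i/w') + (Real.logb 2 3 - 2) := by
        have h1 : Real.logb 2 (x (i+1)/w') ≤ Real.logb 2 ((3/4) * (x i/w')) := by
          apply Real.logb_le_logb_of_le one_lt_two (div_pos hxi1pos hw')
          calc x (i+1) / w' ≤ (3/4 * x i) / w' := by gcongr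
          _ = 3/4 * (x i / w') := by ring
        have heq : Real.logb 2 ((3:ℝ)/4 * (x i/w')) =
            Real.logb 2 (x i/w') + (Real.logb 2 3 - 2) := by
          rw [Real.logb_mul (by norm_num) (ne_of_gt (div_pos hxipos hw')),
            Real.logb_div (by norm_num : (3:ℝ) ≠ 0) (by norm_num : (4:ℝ) ≠ 0),
            show Real.logb 2 4 = 2 by
              rw [show (4:ℝ) = 2^(2:ℕ) by norm_num, Real.logb_pow,
                Real.logb_self_eq_one one_lt_two]; norm_num]
          ring
        rw [heq] at h1
        exact h1
      rw [hns]
      exact stepB (nseq i) hni _ _ (hypos i hi (by omega)) hylt hy'pos hy2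
  have chain : ∀ k, 1 ≤ k → k < i₀ →
      phiF (nseq k) (Real.logb 2 (x k / w')) + ((k:ℝ) - 1) ≤
        phiF (nseq 1) (Real.logb 2 (x 1 / w')) := by
    intro k hk
    induction k, hk using Nat.le_induction with
    | base => intro _; norm_num
    | succ k hk ih =>
      intro hlt
      have h1 := step k hk hlt
      have h2 := ih (by omega)
      push_cast at h2 ⊢
      linarith
  have hkey := chain (i₀ - 1) (by omega) (by omega)
  have hlow := phiF_ge (nseq (i₀-1)) (hpos _ (by omega)) _
    (hypos (i₀-1) (by omega) (by omega))
  have hy1pos : 0 < Real.logb 2 (w/w') := Real.logb_pos one_lt_two ((one_lt_div hw').2 hww)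
  have hbud : phiF (nseq 1) (Real.logb 2 (x 1/w')) ≤ 6*L + (m:ℝ) + 5 := by
    rw [hx1, hn1]
    have hly : Real.logb 2 (Real.logb 2 (w/w')) ≤ L := by
      rw [hLdef]
      apply Real.logb_le_logb_of_le one_lt_two hy1pos
      apply Real.logb_le_logb_of_le one_lt_two (div_pos hw hw') (le_max_right _ _)
    have hmax1 : max (Real.logb 2 (Real.logb 2 (w/w'))) 0 ≤ L := max_le hly (by linarith)
    have hmax2 : max (max (Real.logb 2 (Real.logb 2 (w/w'))) 0 - (m:ℝ) - 1) 0 ≤ L :=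
      max_le (by linarith) (by linarith)
    have hmin2 : min (Real.logb 2 (w/w')) 2 ≤ 2 := min_le_right _ _
    unfold phiF
    linarith
  have hcast : ((i₀ - 1:ℕ):ℝ) = (i₀:ℝ) - 1 := by
    push_cast [Nat.cast_sub hi₀]
    ring
  rw [hcast] at hkey
  linarith
end

section
/- Distance from a point in an isolating interval to the other roots: Let P be a square-free real polynomial of degree n, and let I = (a,b) be an interval such that the Obreshkoff lens L_n of I contains the root z_k of P and no other root. Then for every x ∈ I and every root z_j with j ≠ k, |x - z_j| > min(|x - a|, |x - b|)/(4n). -/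
open Polynomial Finset

set_option maxHeartbeats 1600000 in

/-- if the Obreshkoff lens L_n of I = (a,b) (the interior of the
    intersection of the two disks through a and b whose centers see [a,b] under the
    angle 2π/(n+2)) contains the root z_k and no other root of the square-free
    polynomial P, then for every x ∈ I and every root z_j with j ≠ k,
    |x - z_j| > min(|x-a|,|x-b|)/(4n). -/
theorem stmt19 (n : ℕ) (hn : 2 ≤ n) (p : Polynomial ℝ) (hdeg : p.natDegree = n)
    (hsq : Squarefree p) (z : Fin n → ℂ)
    (hfact : p.map (algebraMap ℝ ℂ) =
      Polynomial.C ((p.leadingCoeff : ℝ) : ℂ) * ∏ i, (Polynomial.X - Polynomial.C (z i)))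
    (a b : ℝ) (hab : a < b) (k : Fin n)
    (lens : Set ℂ)
    (hlens : lens = {w : ℂ |
      ‖w - ((((a+b)/2 : ℝ) : ℂ) +
          (((b-a)/2 / Real.tan (Real.pi / (n+2)) : ℝ) : ℂ) * Complex.I)‖ <
        (b-a)/(2 * Real.sin (Real.pi / (n+2))) ∧
      ‖w - ((((a+b)/2 : ℝ) : ℂ) -
          (((b-a)/2 / Real.tan (Real.pi / (n+2)) : ℝ) : ℂ) * Complex.I)‖ <
        (b-a)/(2 * Real.sin (Real.pi / (n+2)))})
    (hk : z k ∈ lens) (hothers : ∀ j : Fin n, j ≠ k → z j ∉ lens) :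
    ∀ x ∈ Set.Ioo a b, ∀ j : Fin n, j ≠ k →
      min |x - a| |x - b| / (4*(n:ℝ)) < ‖(x : ℂ) - z j‖ := by
  intro x hx j hjk
  obtain ⟨hax, hxb⟩ := hx
  clear hfact hsq hdeg hk
  have hn1 : (1:ℝ) ≤ n := by exact_mod_cast Nat.one_le_of_lt hn
  clear hn
  set θ : ℝ := Real.pi / (n + 2) with hθ
  have hπ := Real.pi_pos
  have hθpos : 0 < θ := by positivity
  have hθlt : θ < Real.pi / 2 := by
    rw [hθ, div_lt_div_iff₀ (by positivity) (by norm_num)]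
    have h1 : Real.pi * 1 ≤ Real.pi * n := mul_le_mul_of_nonneg_left hn1 hπ.le
    linarith
  have hs : 0 < Real.sin θ := Real.sin_pos_of_pos_of_lt_pi hθpos (by linarith)
  have hsin_lb : 2 / ((n:ℝ) + 2) ≤ Real.sin θ := by
    have h := Real.mul_le_sin hθpos.le hθlt.le
    calc (2:ℝ) / ((n:ℝ) + 2) = 2 / Real.pi * θ := by
          rw [hθ]; field_simp
      _ ≤ Real.sin θ := h
  have hcpos : 0 < Real.cos θ := Real.cos_pos_of_mem_Ioo ⟨by linarith, hθlt⟩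
  have hcos : Real.cos θ ^ 2 = 1 - Real.sin θ ^ 2 := by
    have := Real.sin_sq_add_cos_sq θ; linarith
  have htan : Real.tan θ = Real.sin θ / Real.cos θ := Real.tan_eq_sin_div_cos θ
  have htpos : 0 < Real.tan θ := by rw [htan]; positivity
  set L : ℝ := (b - a) / 2 with hL
  have hLpos : 0 < L := by rw [hL]; linarith
  set m : ℝ := (a + b) / 2 with hm
  set h : ℝ := L / Real.tan θ with hh
  set R : ℝ := (b - a) / (2 * Real.sin θ) with hR
  have hRpos : 0 < R := by rw [hR]; exact div_pos (by linarith) (by positivity)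
  have hRs : R * Real.sin θ = L := by rw [hR, hL]; field_simp
  -- d = min distance to endpoints
  set d : ℝ := min (x - a) (b - x) with hd
  have hd0 : 0 < d := lt_min (by linarith) (by linarith)
  have hdL : d ≤ L := by
    have h1 : d ≤ x - a := min_le_left _ _
    have h2 : d ≤ b - x := min_le_right _ _
    rw [hL]; linarith
  have hmin : min |x - a| |x - b| = d := by
    rw [abs_of_pos (by linarith : (0:ℝ) < x - a), abs_of_neg (by linarith : x - b < 0)]
    rw [hd]; ring_nf
  have hxm : (x - m) ^ 2 = (L - d) ^ 2 := by
    rcases min_choice (x - a) (b - x) with hc | hc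
    · rw [hd, hc, hm, hL]; ring
    · rw [hd, hc, hm, hL]; ring
  -- key distance estimate for either center
  set q : ℝ := Real.sqrt ((x - m) ^ 2 + h ^ 2) with hq
  have hq0 : 0 ≤ q := Real.sqrt_nonneg _
  have hq2 : q ^ 2 = (x - m) ^ 2 + h ^ 2 := Real.sq_sqrt (by positivity)
  have hh2 : h ^ 2 = L ^ 2 * (1 - Real.sin θ ^ 2) / Real.sin θ ^ 2 := by
    rw [hh, htan, ← hcos]
    field_simp
  have hR2 : R ^ 2 = L ^ 2 / Real.sin θ ^ 2 := by
    rw [hR, hL]; field_simp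
  have hkey2 : q ^ 2 = R ^ 2 - d * (2 * L - d) := by
    rw [hq2, hxm, hh2, hR2]
    field_simp
    ring
  have hq2R : q ^ 2 ≤ R ^ 2 := by
    have h1 : 0 < d * (2 * L - d) := mul_pos hd0 (by linarith)
    linarith
  have hqR : q ≤ R := by
    by_contra hc
    push_neg at hc
    have := pow_lt_pow_left₀ hc hRpos.le (by norm_num : 2 ≠ 0)
    linarith
  -- z j outside the lens
  have hnot := hothers j hjk
  rw [hlens] at hnot
  simp only [Set.mem_setOf_eq, not_and_or, not_lt] at hnot
  -- the key: for either center c, |x - c| = q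
  have key : ∀ ε : ℝ, ε = 1 ∨ ε = -1 →
      ‖(x:ℂ) - (((m:ℝ):ℂ) + ((ε * h : ℝ):ℂ) * Complex.I)‖ = q := by
    intro ε hε
    rw [hq]
    rw [Complex.norm_def, Complex.normSq_apply]
    have hre : ((x:ℂ) - (((m:ℝ):ℂ) + ((ε * h : ℝ):ℂ) * Complex.I)).re = x - m := by
      simp
    have him : ((x:ℂ) - (((m:ℝ):ℂ) + ((ε * h : ℝ):ℂ) * Complex.I)).im = -(ε * h) := by
      simp
    rw [hre, him]
    congr 1
    rcases hε with hε | hε <;> rw [hε] <;> ring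
  have tri : ∀ c : ℂ, ‖z j - c‖ - ‖(x:ℂ) - c‖ ≤
      ‖(x:ℂ) - z j‖ := by
    intro c
    have := norm_sub_le_norm_sub_add_norm_sub (z j) c ((x:ℂ))
    have h2 := norm_sub_le_norm_sub_add_norm_sub (z j) ((x:ℂ)) c
    have h3 : ‖z j - (x:ℂ)‖ = ‖(x:ℂ) - z j‖ := by
      rw [← norm_neg, neg_sub]
    linarith [norm_sub_le_norm_sub_add_norm_sub (z j) c ((x:ℂ)), h3 ▸ h2]
  -- get R - q ≤ |x - z j|
  have hmain : R - q ≤ ‖(x:ℂ) - z j‖ := by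
    rcases hnot with hout | hout
    · have hc := key 1 (Or.inl rfl)
      have := tri (((m:ℝ):ℂ) + ((1 * h : ℝ):ℂ) * Complex.I)
      rw [hc] at this
      have heq : (((m:ℝ):ℂ) + ((1 * h : ℝ):ℂ) * Complex.I) =
          ((((a+b)/2 : ℝ) : ℂ) + (((b-a)/2 / Real.tan θ : ℝ) : ℂ) * Complex.I) := by
        rw [hm, hh, hL]; push_cast; ring
      rw [heq] at this
      linarith
    · have hc := key (-1) (Or.inr rfl)
      have := tri (((m:ℝ):ℂ) + ((-1 * h : ℝ):ℂ) * Complex.I)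
      rw [hc] at this
      have heq : (((m:ℝ):ℂ) + ((-1 * h : ℝ):ℂ) * Complex.I) =
          ((((a+b)/2 : ℝ) : ℂ) - (((b-a)/2 / Real.tan θ : ℝ) : ℂ) * Complex.I) := by
        rw [hm, hh, hL]; push_cast; ring
      rw [heq] at this
      linarith
  -- final arithmetic: d/(4n) < R - q
  rw [hmin]
  have h2n : 1 < Real.sin θ * (2 * n) := by
    have h1 : (1:ℝ) < 2 / ((n:ℝ) + 2) * (2 * n) := by
      rw [div_mul_eq_mul_div, lt_div_iff₀ (by positivity)]
      linarith
    have h2 : 2 / ((n:ℝ) + 2) * (2 * n) ≤ Real.sin θ * (2 * n) :=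
      mul_le_mul_of_nonneg_right hsin_lb (by positivity)
    linarith
  have hfin : d / (4 * (n:ℝ)) < R - q := by
    rw [div_lt_iff₀ (by positivity)]
    have p1 : (R - q) * (R + q) = d * (2 * L - d) := by linear_combination -hkey2
    have p2 : 0 ≤ d * (L - d) := mul_nonneg hd0.le (by linarith)
    have p4 : d * Real.sin θ * R ≤ (R - q) * 2 * R := by
      have e2 : d * L = d * (R * Real.sin θ) := by rw [hRs]
      linarith [p1, p2, sq_nonneg (R - q), e2]
    have p5 : d * Real.sin θ ≤ (R - q) * 2 :=
      (mul_le_mul_iff_of_pos_right hRpos).mp p4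
    have p6 : d * Real.sin θ * (2 * n) ≤ (R - q) * 2 * (2 * n) :=
      mul_le_mul_of_nonneg_right p5 (by positivity)
    linarith [p6, mul_pos hd0 (sub_pos.mpr h2n)]
  linarith
end
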